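/- arXiv:2510.23573 — 3 statements merged into one kernel-verified Lean document; each statement's English description precedes it below -/
import Mathlib

section
/- Let w' be a word, let a'_0 a'_1 ... a'_{n^3} be a monotone subword of distinct values of w' each occurring at least twice in w', and suppose there is an index j with 0 ≤ j ≤ n^3 - n^2 such that the second occurrences in w' of all the values a'_j, ..., a'_{j+n^2} occur after the first occurrence of a'_{j+n^2}. Then w' contains one of the patterns (01...n)^{e1}(01...n)^{e2} with e1,e2 ∈ {id, rev}. -/
/-- Standardisation of a word: replace the smallest value by 0, next smallest by 1, etc. -/
def stdz (w : List ℕ) : List ℕ := w.map (fun x => ((w.filter (· < x)).dedup).length)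

/-- A word `w` contains the pattern `p` if some subword of `w` standardises to `p`. -/
def Contains (w p : List ℕ) : Prop := ∃ u : List ℕ, u.Sublist w ∧ stdz u = p

/-- Number of repeats: indices having an earlier equal entry. -/
def repeats (w : List ℕ) : ℕ :=
  (Finset.univ.filter (fun i : Fin w.length =>
    ∃ j : Fin w.length, j < i ∧ w.get j = w.get i)).card

/-- Maximum value of a word. -/
def maxVal (w : List ℕ) : ℕ := w.foldr max 0

/-- Skew sum: entries of `u` shifted above those of `v`, with `u` first. -/
def skewSum (u v : List ℕ) : List ℕ := u.map (· + maxVal v) ++ v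

/-- Direct sum: `u` first, entries of `v` shifted above those of `u`. -/
def directSum (u v : List ℕ) : List ℕ := u ++ v.map (· + maxVal u)

/-- Iterated skew sum of `m` copies of `u`. -/
def skewPow (u : List ℕ) : ℕ → List ℕ
  | 0 => []
  | m + 1 => skewSum u (skewPow u m)

/-- Iterated direct sum of `m` copies of `u`. -/
def dirPow (u : List ℕ) : ℕ → List ℕ
  | 0 => []
  | m + 1 => directSum u (dirPow u m)

/-- The pattern 0^m 1^m ... n^m. -/
def repPat (m n : ℕ) : List ℕ := (List.range (n + 1)).flatMap (fun i => List.replicate m i)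

/-- Position of the first occurrence of `v` in `w`. -/
def firstOcc (w : List ℕ) (v : ℕ) : ℕ := w.idxOf v

/-- Position of the second occurrence of `v` in `w`. -/
def secondOcc (w : List ℕ) (v : ℕ) : ℕ :=
  w.idxOf v + 1 + (w.drop (w.idxOf v + 1)).idxOf v


section AuxES
section ES
open Function Finset

open Function Finset


/-- **Erdős–Szekeres Theorem**: Given a sequence of more than `r * s` distinct values, there is an
increasing sequence of length longer than `r` or a decreasing sequence of length longer than `s`.

Proof idea:
We label each value in the sequence with two numbers specifying the longest increasing
subsequence ending there, and the longest decreasing subsequence ending there.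
We then show the pair of labels must be unique. Now if there is no increasing sequence longer than
`r` and no decreasing sequence longer than `s`, then there are at most `r * s` possible labels,
which is a contradiction if there are more than `r * s` elements.
-/
theorem aux_erdos_szekeres {α : Type*} [LinearOrder α] {r s n : ℕ} {f : Fin n → α} (hn : r * s < n) (hf : Injective f) :
    (∃ t : Finset (Fin n), r < #t ∧ StrictMonoOn f ↑t) ∨
      ∃ t : Finset (Fin n), s < #t ∧ StrictAntiOn f ↑t := by
  -- Given an index `i`, produce the set of increasing (resp., decreasing) subsequences which ends
  -- at `i`.
  let inc_sequences_ending_in : Fin n → Finset (Finset (Fin n)) := fun i =>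
    univ.powerset.filter fun t => Finset.max t = i ∧ StrictMonoOn f ↑t
  let dec_sequences_ending_in : Fin n → Finset (Finset (Fin n)) := fun i =>
    univ.powerset.filter fun t => Finset.max t = i ∧ StrictAntiOn f ↑t
  -- The singleton sequence is in both of the above collections.
  -- (This is useful to show that the maximum length subsequence is at least 1, and that the set
  -- of subsequences is nonempty.)
  have inc_i : ∀ i, {i} ∈ inc_sequences_ending_in i := fun i => by
    simp [inc_sequences_ending_in, StrictMonoOn]
  have dec_i : ∀ i, {i} ∈ dec_sequences_ending_in i := fun i => by
    simp [dec_sequences_ending_in, StrictAntiOn]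
  -- Define the pair of labels: at index `i`, the pair is the maximum length of an increasing
  -- subsequence ending at `i`, paired with the maximum length of a decreasing subsequence ending
  -- at `i`.
  -- We call these labels `(a_i, b_i)`.
  let ab' : Fin n → ℕ × ℕ := by
    intro i
    apply
      (max' ((inc_sequences_ending_in i).image card) (Nonempty.image ⟨{i}, inc_i i⟩ _),
        max' ((dec_sequences_ending_in i).image card) (Nonempty.image ⟨{i}, dec_i i⟩ _))
  -- Porting note: it costs many resources to unfold `ab'` so we obscure the definition:
  generalize hab : ab' = ab
  -- It now suffices to show that one of the labels is 'big' somewhere. In particular, if the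
  -- first in the pair is more than `r` somewhere, then we have an increasing subsequence in our
  -- set, and if the second is more than `s` somewhere, then we have a decreasing subsequence.
  rsuffices ⟨i, hi⟩ : ∃ i, r < (ab i).1 ∨ s < (ab i).2
  · refine Or.imp ?_ ?_ hi
    on_goal 1 =>
      have : (ab i).1 ∈ image card (inc_sequences_ending_in i) := by
        simp only [← hab]; exact max'_mem _ (Nonempty.image ⟨{i}, inc_i i⟩ _)
    on_goal 2 =>
      have : (ab i).2 ∈ image card (dec_sequences_ending_in i) := by
        simp only [← hab]; exact max'_mem _ (Nonempty.image ⟨{i}, dec_i i⟩ _)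
    all_goals
      intro hi
      rw [mem_image] at this
      obtain ⟨t, ht₁, ht₂⟩ := this
      refine ⟨t, by rwa [ht₂], ?_⟩
      rw [mem_filter] at ht₁
      apply ht₁.2.2
  -- Show first that the pair of labels is unique.
  have : Injective ab := by
    simp only [← hab]
    apply Injective.of_lt_imp_ne
    intro i j k q
    injection q with q₁ q₂
    -- We have two cases: `f i < f j` or `f j < f i`.
    -- In the former we'll show `a_i < a_j`, and in the latter we'll show `b_i < b_j`.
    cases lt_or_gt_of_ne fun _ => ne_of_lt ‹i < j› (hf ‹f i = f j›)
    on_goal 1 =>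
      apply ne_of_lt _ q₁
      have : (ab' i).1 ∈ image card (inc_sequences_ending_in i) := by exact max'_mem _ (Nonempty.image ⟨{i}, inc_i i⟩ _)
    on_goal 2 =>
      apply ne_of_lt _ q₂
      have : (ab' i).2 ∈ image card (dec_sequences_ending_in i) := by exact max'_mem _ (Nonempty.image ⟨{i}, dec_i i⟩ _)
    all_goals
      -- Reduce to showing there is a subsequence of length `a_i + 1` which ends at `j`.
      rw [Nat.lt_iff_add_one_le]
      apply le_max'
      rw [mem_image] at this ⊢
      -- In particular we take the subsequence `t` of length `a_i` which ends at `i`, by definition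
      -- of `a_i`
      rcases this with ⟨t, ht₁, ht₂⟩
      rw [mem_filter] at ht₁
      -- Ensure `t` ends at `i`.
      have : t.max = i := by simp only [ht₁.2.1]
      -- Now our new subsequence is given by adding `j` at the end of `t`.
      refine ⟨insert j t, ?_, ?_⟩
      -- First make sure it's valid, i.e., that this subsequence ends at `j` and is increasing
      · rw [mem_filter]
        refine ⟨?_, ?_, ?_⟩
        · rw [mem_powerset]; apply subset_univ
        -- It ends at `j` since `i < j`.
        · convert max_insert (a := j) (s := t)
          rw [ht₁.2.1, max_eq_left]
          apply WithBot.coe_le_coe.mpr (le_of_lt ‹i < j›)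
        -- To show it's increasing (i.e., `f` is monotone increasing on `t.insert j`), we do cases
        -- on what the possibilities could be - either in `t` or equals `j`.
        simp only [StrictMonoOn, StrictAntiOn, coe_insert, Set.mem_insert_iff, mem_coe]
        -- Most of the cases are just bashes.
        rintro x ⟨rfl | _⟩ y ⟨rfl | _⟩ _
        · apply (irrefl _ ‹j < j›).elim
        · exfalso
          apply not_le_of_gt (_root_.trans ‹i < j› ‹j < y›) (le_max_of_eq ‹y ∈ t› ‹t.max = i›)
        · first
          | apply lt_of_le_of_lt _ ‹f i < f j›
          | apply lt_of_lt_of_le ‹f j < f i› _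
          rcases lt_or_eq_of_le (le_max_of_eq ‹x ∈ t› ‹t.max = i›) with (_ | rfl)
          · apply le_of_lt (ht₁.2.2 ‹x ∈ t› (mem_of_max ‹t.max = i›) ‹x < i›)
          · rfl
        · apply ht₁.2.2 ‹x ∈ t› ‹y ∈ t› ‹x < y›
      -- Finally show that this new subsequence is one longer than the old one.
      · rw [card_insert_of_notMem, ht₂]
        intro
        apply not_le_of_gt ‹i < j› (le_max_of_eq ‹j ∈ t› ‹t.max = i›)
  -- Finished both goals!
  -- Now that we have uniqueness of each label, it remains to do some counting to finish off.
  -- Suppose all the labels are small.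
  by_contra! q
  -- Then the labels `(a_i, b_i)` all fit in the following set: `{ (x,y) | 1 ≤ x ≤ r, 1 ≤ y ≤ s }`
  let ran : Finset (ℕ × ℕ) := (range r).image Nat.succ ×ˢ (range s).image Nat.succ
  -- which we prove here.
  have : image ab univ ⊆ ran := by
    -- First some logical shuffling
    rintro ⟨x₁, x₂⟩
    simp only [ran, mem_image, exists_prop, mem_range, mem_univ, mem_product, true_and,
      Prod.ext_iff]
    rintro ⟨i, rfl, rfl⟩
    specialize q i
    -- Show `1 ≤ a_i` and `1 ≤ b_i`, which is easy from the fact that `{i}` is an increasing and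
    -- decreasing subsequence which we did right near the top.
    have z : 1 ≤ (ab i).1 ∧ 1 ≤ (ab i).2 := by
      simp only [← hab]
      constructor <;>
        · apply le_max'
          rw [mem_image]
          exact ⟨{i}, by solve_by_elim, card_singleton i⟩
    -- Need to get `a_i ≤ r`, here phrased as: there is some `a < r` with `a+1 = a_i`.
    exact ⟨⟨(ab i).1 - 1, by omega⟩, (ab i).2 - 1, by omega⟩
  -- To get our contradiction, it suffices to prove `n ≤ r * s`
  apply not_le_of_gt hn
  -- Which follows from considering the cardinalities of the subset above, since `ab` is injective.
  simpa [ran, Nat.succ_injective, card_image_of_injective, ‹Injective ab›] using card_le_card this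

end ES

end AuxES

section AuxLemmas
open List

lemma aux_sublist_of_indices (w : List ℕ) (p : List ℕ) (hc : p.Pairwise (· < ·))
    (hlt : ∀ i ∈ p, i < w.length) : (p.map (fun i => w.getD i 0)).Sublist w := by
  induction w generalizing p with
  | nil =>
    cases p with
    | nil => simp
    | cons i p => exact absurd (hlt i (mem_cons_self)) (by simp)
  | cons x w ih =>
    have key : ∀ q : List ℕ, (∀ y ∈ q, 0 < y) →
        q.map (fun i => (x :: w).getD i 0) = (q.map (· - 1)).map (fun i => w.getD i 0) := by
      intro q hq
      rw [map_map]
      apply map_congr_left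
      intro y hy
      obtain ⟨z, rfl⟩ := Nat.exists_eq_add_of_lt (hq y hy)
      simp [Nat.add_comm]
    cases p with
    | nil => simp
    | cons i p =>
      obtain ⟨h1, h2⟩ := pairwise_cons.1 hc
      by_cases hi : i = 0
      · subst hi
        rw [map_cons, getD_cons_zero, key p (fun y hy => h1 y hy)]
        apply Sublist.cons₂
        apply ih
        · rw [pairwise_map]
          exact h2.imp_of_mem (fun {a b} ha hb hab => by
            have := h1 a ha; omega)
        · intro z hz
          rw [mem_map] at hz
          obtain ⟨y, hy, rfl⟩ := hz
          have hy1 := hlt y (mem_cons_of_mem _ hy)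
          have hy2 := h1 y hy
          simp only [length_cons] at hy1
          omega
      · have hpos : ∀ y ∈ i :: p, 0 < y := by
          intro y hy
          rcases mem_cons.1 hy with rfl | hy'
          · omega
          · have := h1 y hy'; omega
        rw [key (i :: p) hpos]
        apply Sublist.cons
        apply ih
        · rw [pairwise_map]
          refine hc.imp_of_mem (fun {a b} ha hb hab => ?_)
          have h0 : 0 < a := hpos a ha
          omega
        · intro z hz
          rw [mem_map] at hz
          obtain ⟨y, hy, rfl⟩ := hz
          have hy1 := hlt y hy
          simp only [length_cons] at hy1
          have := hpos y hy
          omega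

lemma aux_stdz_map (f : ℕ → ℕ) (hf : StrictMono f) (l : List ℕ) :
    stdz (l.map f) = stdz l := by
  unfold stdz
  rw [map_map]
  apply map_congr_left
  intro x hx
  have hfil : (l.map f).filter (· < f x) = (l.filter (· < x)).map f := by
    rw [filter_map]
    congr 1
    apply filter_congr
    intro y hy
    simp [Function.comp, hf.lt_iff_lt]
  simp only [Function.comp_apply, hfil, dedup_map_of_injective hf.injective, length_map]

lemma aux_toFinset_range (m : ℕ) : (List.range m).toFinset = Finset.range m := by
  ext x; simp

lemma aux_stdz_self (m : ℕ) (p : List ℕ) (hp : p.toFinset = Finset.range m) :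
    stdz p = p := by
  unfold stdz
  conv_rhs => rw [← List.map_id p]
  apply map_congr_left
  intro x hx
  have hxm : x < m := by
    have : x ∈ p.toFinset := mem_toFinset.2 hx
    rw [hp, Finset.mem_range] at this; exact this
  rw [← List.card_toFinset, toFinset_filter, hp]
  have : Finset.filter (fun y => decide (y < x) = true) (Finset.range m) = Finset.range x := by
    ext y; simp [Finset.mem_filter]; omega
  rw [this, Finset.card_range]
  rfl

lemma aux_rev_range (m : ℕ) :
    (List.range (m + 1)).reverse = (List.range (m + 1)).map (fun x => m - x) := by
  apply List.ext_getElem (by simp)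
  intro i h1 h2
  simp [List.getElem_reverse]

lemma aux_not_mem_take_indexOf (v : ℕ) : ∀ l : List ℕ, v ∉ l.take (l.idxOf v) := by
  intro l
  induction l with
  | nil => simp
  | cons x l ih =>
    by_cases h : x = v
    · subst h; simp [idxOf_cons_self]
    · rw [idxOf_cons_ne _ (by omega : x ≠ v)]
      simp only [take_succ_cons, mem_cons]
      rintro (rfl | hm)
      · omega
      · exact ih hm

lemma aux_firstOcc_lt_length {w : List ℕ} {v : ℕ} (h : v ∈ w) : firstOcc w v < w.length :=
  idxOf_lt_length_iff.2 h

lemma aux_getD_firstOcc {w : List ℕ} {v : ℕ} (h : v ∈ w) : w.getD (firstOcc w v) 0 = v := by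
  rw [getD_eq_getElem _ _ (aux_firstOcc_lt_length h)]
  exact getElem_idxOf (aux_firstOcc_lt_length h)

lemma aux_mem_drop {w : List ℕ} {v : ℕ} (h : 2 ≤ w.count v) :
    v ∈ w.drop (w.idxOf v + 1) := by
  have hv : v ∈ w := by
    have : 0 < w.count v := by omega
    exact count_pos_iff.1 this
  have hlt : w.idxOf v < w.length := idxOf_lt_length_iff.2 hv
  have hsplit : w = w.take (w.idxOf v + 1) ++ w.drop (w.idxOf v + 1) :=
    (take_append_drop _ _).symm
  have htake : (w.take (w.idxOf v + 1)).count v = 1 := by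
    rw [take_succ]
    rw [count_append]
    have h1 : (w.take (w.idxOf v)).count v = 0 := by
      rw [count_eq_zero]
      exact aux_not_mem_take_indexOf v w
    have h2 : w[w.idxOf v]? = some v := by
      rw [getElem?_eq_getElem hlt, getElem_idxOf hlt]
    rw [h1, h2]
    simp
  have : w.count v = (w.take (w.idxOf v + 1)).count v + (w.drop (w.idxOf v + 1)).count v := by
    conv_lhs => rw [hsplit]
    rw [count_append]
  rw [htake] at this
  have : 0 < (w.drop (w.idxOf v + 1)).count v := by omega
  exact count_pos_iff.1 this

lemma aux_secondOcc_lt_length {w : List ℕ} {v : ℕ} (h : 2 ≤ w.count v) :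
    secondOcc w v < w.length := by
  have hd := aux_mem_drop h
  have hlt : (w.drop (w.idxOf v + 1)).idxOf v < (w.drop (w.idxOf v + 1)).length :=
    idxOf_lt_length_iff.2 hd
  rw [length_drop] at hlt
  unfold secondOcc
  have hv : v ∈ w := count_pos_iff.1 (by omega)
  have := idxOf_lt_length_iff.2 hv
  omega

lemma aux_getD_secondOcc {w : List ℕ} {v : ℕ} (h : 2 ≤ w.count v) :
    w.getD (secondOcc w v) 0 = v := by
  have hd := aux_mem_drop h
  have hlt : (w.drop (w.idxOf v + 1)).idxOf v < (w.drop (w.idxOf v + 1)).length :=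
    idxOf_lt_length_iff.2 hd
  rw [getD_eq_getElem _ _ (aux_secondOcc_lt_length h)]
  have : w[secondOcc w v]'(aux_secondOcc_lt_length h) =
      (w.drop (w.idxOf v + 1))[(w.drop (w.idxOf v + 1)).idxOf v]'hlt := by
    rw [getElem_drop]
    rfl
  rw [this, getElem_idxOf]

lemma aux_firstOcc_lt_secondOcc (w : List ℕ) (v : ℕ) : firstOcc w v < secondOcc w v := by
  unfold firstOcc secondOcc; omega

lemma aux_strictMono_plus (b : ℕ → ℕ) (n : ℕ)
    (hb : ∀ i i', i < i' → i' ≤ n → b i < b i')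
    (hsat : ∀ i, b i = b (min i n)) :
    StrictMono (fun i => b i + (i - n)) := by
  intro i j hij
  dsimp only
  rcases (by omega : min i n < min j n ∨ (min i n = min j n ∧ i - n < j - n)) with h | ⟨h1, h2⟩
  · have hbb : b i < b j := by
      rw [hsat i, hsat j]
      exact hb _ _ h (by omega)
    have : i - n ≤ j - n := by omega
    omega
  · have : b i = b j := by rw [hsat i, hsat j, h1]
    omega

lemma aux_core (n : ℕ) (w : List ℕ) (p q : ℕ → ℕ)
    (hp : ∀ i i', i < i' → i' ≤ n → p i < p i')
    (hq : ∀ i i', i < i' → i' ≤ n → q i < q i')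
    (hpq : ∀ i i', i ≤ n → i' ≤ n → p i < q i')
    (hplen : ∀ i ≤ n, p i < w.length)
    (hqlen : ∀ i ≤ n, q i < w.length)
    (T : List ℕ) (F : ℕ → ℕ) (hF : StrictMono F)
    (hT : T.toFinset = Finset.range (n + 1))
    (hvals : (List.range (n + 1)).map (fun i => w.getD (p i) 0) ++
             (List.range (n + 1)).map (fun i => w.getD (q i) 0) = T.map F) :
    Contains w T := by
  set P : List ℕ := (List.range (n + 1)).map p ++ (List.range (n + 1)).map q with hP
  have hpw : P.Pairwise (· < ·) := by
    rw [pairwise_append]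
    refine ⟨?_, ?_, ?_⟩
    · rw [pairwise_map]
      exact (pairwise_lt_range).imp_of_mem fun {a b} ha hb hab =>
        hp a b hab (by simpa using Nat.lt_succ_iff.1 (mem_range.1 hb))
    · rw [pairwise_map]
      exact (pairwise_lt_range).imp_of_mem fun {a b} ha hb hab =>
        hq a b hab (by simpa using Nat.lt_succ_iff.1 (mem_range.1 hb))
    · intro x hx y hy
      rw [mem_map] at hx hy
      obtain ⟨i, hi, rfl⟩ := hx
      obtain ⟨i', hi', rfl⟩ := hy
      exact hpq i i' (Nat.lt_succ_iff.1 (mem_range.1 hi)) (Nat.lt_succ_iff.1 (mem_range.1 hi'))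
  have hbd : ∀ i ∈ P, i < w.length := by
    intro x hx
    rw [hP, mem_append, mem_map, mem_map] at hx
    rcases hx with ⟨i, hi, rfl⟩ | ⟨i, hi, rfl⟩
    · exact hplen i (Nat.lt_succ_iff.1 (mem_range.1 hi))
    · exact hqlen i (Nat.lt_succ_iff.1 (mem_range.1 hi))
  have hsub := aux_sublist_of_indices w P hpw hbd
  have hPmap : P.map (fun i => w.getD i 0) = T.map F := by
    rw [hP, map_append, map_map, map_map, ← hvals]
    rfl
  rw [hPmap] at hsub
  exact ⟨T.map F, hsub, by rw [aux_stdz_map F hF, aux_stdz_self (n + 1) T hT]⟩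

lemma aux_main (n : ℕ) (w' : List ℕ) (val : ℕ → ℕ)
    (hsat : ∀ i, val i = val (min i n))
    (hcnt : ∀ i, i ≤ n → 2 ≤ w'.count (val i))
    (hvm : (∀ i i', i < i' → i' ≤ n → val i < val i') ∨
           (∀ i i', i < i' → i' ≤ n → val i' < val i))
    (hfm : ∀ i i', i < i' → i' ≤ n → firstOcc w' (val i) < firstOcc w' (val i'))
    (hsm : (∀ i i', i < i' → i' ≤ n → secondOcc w' (val i) < secondOcc w' (val i')) ∨
           (∀ i i', i < i' → i' ≤ n → secondOcc w' (val i') < secondOcc w' (val i)))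
    (hfs : ∀ i i', i ≤ n → i' ≤ n → firstOcc w' (val i) < secondOcc w' (val i')) :
    ∃ e₁ ∈ ({id, List.reverse} : Set (List ℕ → List ℕ)),
      ∃ e₂ ∈ ({id, List.reverse} : Set (List ℕ → List ℕ)),
        Contains w' (e₁ (List.range (n + 1)) ++ e₂ (List.range (n + 1))) := by
  have hmem : ∀ i, i ≤ n → val i ∈ w' := fun i hi => count_pos_iff.1 (by have := hcnt i hi; omega)
  -- LHS value computations
  have hL1 : (List.range (n + 1)).map (fun i => w'.getD (firstOcc w' (val i)) 0) =
      (List.range (n + 1)).map val := by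
    apply map_congr_left
    intro x hx
    exact aux_getD_firstOcc (hmem x (Nat.lt_succ_iff.1 (mem_range.1 hx)))
  have hL2a : (List.range (n + 1)).map (fun i => w'.getD (secondOcc w' (val i)) 0) =
      (List.range (n + 1)).map val := by
    apply map_congr_left
    intro x hx
    exact aux_getD_secondOcc (hcnt x (Nat.lt_succ_iff.1 (mem_range.1 hx)))
  have hL2b : (List.range (n + 1)).map (fun i => w'.getD (secondOcc w' (val (n - i))) 0) =
      (List.range (n + 1)).map (fun i => val (n - i)) := by
    apply map_congr_left
    intro x hx
    exact aux_getD_secondOcc (hcnt (n - x) (by omega))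
  -- RHS blocks for increasing F
  have hRA : (List.range (n + 1)).map (fun i => val i + (i - n)) =
      (List.range (n + 1)).map val := by
    apply map_congr_left
    intro x hx
    have : x - n = 0 := by have := mem_range.1 hx; omega
    simp [this]
  have hRB : ((List.range (n + 1)).reverse).map (fun i => val i + (i - n)) =
      (List.range (n + 1)).map (fun i => val (n - i)) := by
    rw [aux_rev_range, map_map]
    apply map_congr_left
    intro x hx
    simp
  -- RHS blocks for decreasing F
  have hRC : (List.range (n + 1)).map (fun i => val (n - i) + (i - n)) =
      (List.range (n + 1)).map (fun i => val (n - i)) := by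
    apply map_congr_left
    intro x hx
    have : x - n = 0 := by have := mem_range.1 hx; omega
    simp [this]
  have hRD : ((List.range (n + 1)).reverse).map (fun i => val (n - i) + (i - n)) =
      (List.range (n + 1)).map val := by
    rw [aux_rev_range, map_map]
    apply map_congr_left
    intro x hx
    have h1 : n - (n - x) = x := by have := mem_range.1 hx; omega
    have h2 : n - x - n = 0 := by omega
    simp [Function.comp, h1, h2]
  have hidmem : id ∈ ({id, List.reverse} : Set (List ℕ → List ℕ)) := Set.mem_insert _ _
  have hrevmem : List.reverse ∈ ({id, List.reverse} : Set (List ℕ → List ℕ)) :=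
    Set.mem_insert_of_mem _ rfl
  -- p is always firstOcc
  set P : ℕ → ℕ := fun i => firstOcc w' (val i) with hPdef
  rcases hvm with hv | hv
  · -- increasing values: F increasing
    have hF : StrictMono (fun i => val i + (i - n)) := aux_strictMono_plus val n hv hsat
    rcases hsm with hs | hs
    · refine ⟨id, hidmem, id, hidmem, ?_⟩
      simp only [id_eq]
      apply aux_core n w' P (fun i => secondOcc w' (val i)) hfm hs
        (fun i i' hi hi' => hfs i i' hi hi')
        (fun i hi => aux_firstOcc_lt_length (hmem i hi))
        (fun i hi => aux_secondOcc_lt_length (hcnt i hi))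
        _ _ hF
      · rw [toFinset_append, aux_toFinset_range, Finset.union_self]
      · rw [hL1, hL2a, map_append, hRA]
    · refine ⟨id, hidmem, List.reverse, hrevmem, ?_⟩
      simp only [id_eq]
      apply aux_core n w' P (fun i => secondOcc w' (val (n - i)))
        hfm (fun i i' hi hi' => hs (n - i') (n - i) (by omega) (by omega))
        (fun i i' hi hi' => hfs i (n - i') hi (by omega))
        (fun i hi => aux_firstOcc_lt_length (hmem i hi))
        (fun i hi => aux_secondOcc_lt_length (hcnt (n - i) (by omega)))
        _ _ hF
      · rw [toFinset_append, toFinset_reverse, aux_toFinset_range, Finset.union_self]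
      · rw [hL1, hL2b, map_append, hRA, hRB]
  · -- decreasing values
    have hb : ∀ i i', i < i' → i' ≤ n → val (n - i) < val (n - i') := by
      intro i i' hi hi'
      exact hv (n - i') (n - i) (by omega) (by omega)
    have hbsat : ∀ i, val (n - i) = val (n - min i n) := by
      intro i
      have : n - i = n - min i n := by omega
      rw [this]
    have hF : StrictMono (fun i => val (n - i) + (i - n)) :=
      aux_strictMono_plus (fun i => val (n - i)) n hb hbsat
    rcases hsm with hs | hs
    · refine ⟨List.reverse, hrevmem, List.reverse, hrevmem, ?_⟩
      apply aux_core n w' P (fun i => secondOcc w' (val i)) hfm hs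
        (fun i i' hi hi' => hfs i i' hi hi')
        (fun i hi => aux_firstOcc_lt_length (hmem i hi))
        (fun i hi => aux_secondOcc_lt_length (hcnt i hi))
        _ _ hF
      · rw [toFinset_append, toFinset_reverse, aux_toFinset_range, Finset.union_self]
      · rw [hL1, hL2a, map_append, hRD]
    · refine ⟨List.reverse, hrevmem, id, hidmem, ?_⟩
      simp only [id_eq]
      apply aux_core n w' P (fun i => secondOcc w' (val (n - i)))
        hfm (fun i i' hi hi' => hs (n - i') (n - i) (by omega) (by omega))
        (fun i i' hi hi' => hfs i (n - i') hi (by omega))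
        (fun i hi => aux_firstOcc_lt_length (hmem i hi))
        (fun i hi => aux_secondOcc_lt_length (hcnt (n - i) (by omega)))
        _ _ hF
      · rw [toFinset_append, toFinset_reverse, aux_toFinset_range, Finset.union_self]
      · rw [hL1, hL2b, map_append, hRD, hRC]

end AuxLemmas

open List in
theorem stmt_4 (n : ℕ) (w' : List ℕ) (a : ℕ → ℕ)
    (hcount : ∀ i ≤ n ^ 3, 2 ≤ w'.count (a i))
    (hmono : (∀ i j, i < j → j ≤ n ^ 3 → a i < a j) ∨
             (∀ i j, i < j → j ≤ n ^ 3 → a j < a i))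
    (hpos : ∀ i j, i < j → j ≤ n ^ 3 → firstOcc w' (a i) < firstOcc w' (a j))
    (j : ℕ) (hj : j + n ^ 2 ≤ n ^ 3)
    (hsec : ∀ i, j ≤ i → i ≤ j + n ^ 2 →
      firstOcc w' (a (j + n ^ 2)) < secondOcc w' (a i)) :
    ∃ e₁ ∈ ({id, List.reverse} : Set (List ℕ → List ℕ)),
      ∃ e₂ ∈ ({id, List.reverse} : Set (List ℕ → List ℕ)),
        Contains w' (e₁ (List.range (n + 1)) ++ e₂ (List.range (n + 1))) := by
  have hn3 : ∀ m : ℕ, m ≤ n ^ 2 → j + m ≤ n ^ 3 := fun m hm => le_trans (by omega) hj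
  have ha : ∀ p q, p ≤ n ^ 3 → q ≤ n ^ 3 → a p = a q → p = q := by
    intro p q hp hq he
    by_contra hne
    rcases Nat.lt_or_ge p q with h | h
    · rcases hmono with hm | hm
      · exact absurd he (Nat.ne_of_lt (hm p q h hq))
      · exact absurd he.symm (Nat.ne_of_lt (hm p q h hq))
    · have h' : q < p := by omega
      rcases hmono with hm | hm
      · exact absurd he.symm (Nat.ne_of_lt (hm q p h' hp))
      · exact absurd he (Nat.ne_of_lt (hm q p h' hp))
  have hcnt2 : ∀ m : ℕ, m ≤ n ^ 2 → 2 ≤ w'.count (a (j + m)) :=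
    fun m hm => hcount _ (hn3 m hm)
  set g : Fin (n ^ 2 + 1) → ℕ := fun m => secondOcc w' (a (j + (m : ℕ))) with hg
  have hginj : Function.Injective g := by
    intro m m' he
    have hm := hcnt2 m (Nat.lt_succ_iff.1 m.isLt)
    have hm' := hcnt2 m' (Nat.lt_succ_iff.1 m'.isLt)
    have h1 := aux_getD_secondOcc hm
    have h2 := aux_getD_secondOcc hm'
    rw [show secondOcc w' (a (j + (m : ℕ))) = g m from rfl] at h1
    rw [show secondOcc w' (a (j + (m' : ℕ))) = g m' from rfl] at h2
    rw [he, h2] at h1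
    have := ha (j + (m' : ℕ)) (j + (m : ℕ)) (hn3 _ (Nat.lt_succ_iff.1 m'.isLt))
      (hn3 _ (Nat.lt_succ_iff.1 m.isLt)) h1
    exact Fin.ext (by omega)
  have hnn : n * n < n ^ 2 + 1 := by
    have : n ^ 2 = n * n := sq n
    omega
  rcases aux_erdos_szekeres hnn hginj with ⟨t, htc, htm⟩ | ⟨t, htc, htm⟩ <;>
  · obtain ⟨t', ht'sub, ht'card⟩ := Finset.exists_subset_card_eq (by omega : n + 1 ≤ t.card)
    set σ := t'.orderEmbOfFin ht'card with hσ
    have hσmem : ∀ i : Fin (n + 1), σ i ∈ t := fun i => ht'sub (t'.orderEmbOfFin_mem ht'card i)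
    set c : ℕ → ℕ := fun i => (σ ⟨min i n, by omega⟩ : ℕ) with hc
    have hcmono : ∀ i i', i < i' → i' ≤ n → c i < c i' := by
      intro i i' hi hi'
      have : (⟨min i n, by omega⟩ : Fin (n + 1)) < ⟨min i' n, by omega⟩ := by
        rw [Fin.mk_lt_mk]; omega
      exact σ.strictMono this
    have hcbd : ∀ i, c i ≤ n ^ 2 := fun i => Nat.lt_succ_iff.1 (σ ⟨min i n, by omega⟩).isLt
    set val : ℕ → ℕ := fun i => a (j + c i) with hval
    have hsat : ∀ i, val i = val (min i n) := by
      intro i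
      have : (⟨min i n, by omega⟩ : Fin (n + 1)) = ⟨min (min i n) n, by omega⟩ :=
        Fin.ext (by simp)
      simp only [hval, hc, this]
    have hcnt : ∀ i, i ≤ n → 2 ≤ w'.count (val i) := fun i _ => hcnt2 (c i) (hcbd i)
    have hvm : (∀ i i', i < i' → i' ≤ n → val i < val i') ∨
               (∀ i i', i < i' → i' ≤ n → val i' < val i) := by
      rcases hmono with hm | hm
      · exact Or.inl fun i i' hi hi' =>
          hm _ _ (by have := hcmono i i' hi hi'; omega) (hn3 _ (hcbd i'))
      · exact Or.inr fun i i' hi hi' =>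
          hm _ _ (by have := hcmono i i' hi hi'; omega) (hn3 _ (hcbd i'))
    have hfm : ∀ i i', i < i' → i' ≤ n → firstOcc w' (val i) < firstOcc w' (val i') := by
      intro i i' hi hi'
      exact hpos _ _ (by have := hcmono i i' hi hi'; omega) (hn3 _ (hcbd i'))
    have hfs : ∀ i i', i ≤ n → i' ≤ n → firstOcc w' (val i) < secondOcc w' (val i') := by
      intro i i' hi hi'
      have hlast : firstOcc w' (val i) ≤ firstOcc w' (a (j + n ^ 2)) := by
        rcases Nat.lt_or_ge (c i) (n ^ 2) with h | h
        · exact le_of_lt (hpos _ _ (by omega) hj)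
        · have : c i = n ^ 2 := by have := hcbd i; omega
          rw [hval]
          simp only [this]
          exact le_refl _
      have hlt : firstOcc w' (a (j + n ^ 2)) < secondOcc w' (val i') :=
        hsec (j + c i') (by omega) (by have := hcbd i'; omega)
      omega
    first
    | -- mono case
      (have hsm : ∀ i i', i < i' → i' ≤ n → secondOcc w' (val i) < secondOcc w' (val i') := by
        intro i i' hi hi'
        have h1 : (⟨min i n, by omega⟩ : Fin (n + 1)) < ⟨min i' n, by omega⟩ := by
          rw [Fin.mk_lt_mk]; omega
        exact htm (hσmem _) (hσmem _) (σ.strictMono h1)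
       exact aux_main n w' val hsat hcnt hvm hfm (Or.inl hsm) hfs)
    | -- anti case
      (have hsm : ∀ i i', i < i' → i' ≤ n → secondOcc w' (val i') < secondOcc w' (val i) := by
        intro i i' hi hi'
        have h1 : (⟨min i n, by omega⟩ : Fin (n + 1)) < ⟨min i' n, by omega⟩ := by
          rw [Fin.mk_lt_mk]; omega
        exact htm (hσmem _) (hσmem _) (σ.strictMono h1)
       exact aux_main n w' val hsat hcnt hvm hfm (Or.inr hsm) hfs)
end

section
/- The word q = p^{⊖n^2} · (r^{⊖n})^{⊕n}, where p = 12...n^2 and r = (1^{⊕n})^{⊖n}, does not contain any of the patterns (01...n)^{e1}(01...n)^{e2} for e1, e2 ∈ {id, rev}. -/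
lemma maxVal_append (u v : List ℕ) : maxVal (u ++ v) = max (maxVal u) (maxVal v) := by
  induction u with
  | nil => simp [maxVal]
  | cons a t ih =>
    simp only [maxVal, List.foldr_cons, List.cons_append] at *
    rw [ih]; exact (max_assoc _ _ _).symm

lemma maxVal_map_add (u : List ℕ) (s : ℕ) (hu : u ≠ []) :
    maxVal (u.map (· + s)) = maxVal u + s := by
  induction u with
  | nil => simp at hu
  | cons a t ih =>
    rcases t with _ | ⟨b, t⟩
    · simp [maxVal]
    · simp only [List.map_cons, maxVal, List.foldr_cons] at *
      rw [ih (by simp), Nat.add_max_add_right]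

lemma le_maxVal {a : ℕ} {u : List ℕ} (h : a ∈ u) : a ≤ maxVal u := by
  induction u with
  | nil => simp at h
  | cons b t ih =>
    rcases List.mem_cons.1 h with rfl | h
    · simp [maxVal]
    · have := ih h; simp only [maxVal, List.foldr_cons] at *
      exact le_trans this (le_max_right _ _)

lemma maxVal_le {u : List ℕ} {K : ℕ} (h : ∀ a ∈ u, a ≤ K) : maxVal u ≤ K := by
  induction u with
  | nil => simp [maxVal]
  | cons b t ih =>
    simp only [maxVal, List.foldr_cons, max_le_iff] at *
    exact ⟨h _ (.head _), ih fun a ha => h a (.tail _ ha)⟩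

lemma maxVal_eq {u : List ℕ} {K : ℕ} (h1 : ∀ a ∈ u, a ≤ K) (h2 : K ∈ u) : maxVal u = K :=
  le_antisymm (maxVal_le h1) (le_maxVal h2)

lemma skewPow_ne_nil {x : List ℕ} (hx : x ≠ []) {m : ℕ} (hm : 0 < m) : skewPow x m ≠ [] := by
  rcases m with _ | m
  · omega
  · simp only [skewPow, skewSum, ne_eq, List.append_eq_nil_iff, List.map_eq_nil_iff]
    tauto

lemma dirPow_ne_nil {x : List ℕ} (hx : x ≠ []) {m : ℕ} (hm : 0 < m) : dirPow x m ≠ [] := by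
  rcases m with _ | m
  · omega
  · simp only [dirPow, directSum, ne_eq, List.append_eq_nil_iff]
    tauto

lemma maxVal_skewPow {x : List ℕ} {M : ℕ} (hx : x ≠ []) (hM : maxVal x = M) :
    ∀ m, maxVal (skewPow x m) = m * M := by
  intro m
  induction m with
  | zero => simp [skewPow, maxVal]
  | succ m ih =>
    rw [skewPow, skewSum, maxVal_append, maxVal_map_add _ _ hx, ih, hM, Nat.succ_mul]
    omega

lemma maxVal_dirPow {x : List ℕ} {M : ℕ} (hx : x ≠ []) (hM : maxVal x = M) :
    ∀ m, maxVal (dirPow x m) = m * M := by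
  intro m
  induction m with
  | zero => simp [dirPow, maxVal]
  | succ m ih =>
    rw [dirPow, directSum, maxVal_append, hM]
    rcases Nat.eq_zero_or_pos m with rfl | hm
    · simp [dirPow, maxVal]
    · rw [maxVal_map_add _ _ (dirPow_ne_nil hx hm), ih, Nat.succ_mul]
      omega

lemma mem_skewPow {x : List ℕ} {M : ℕ} (hx : x ≠ []) (hM : maxVal x = M)
    (hb : ∀ a ∈ x, 1 ≤ a) :
    ∀ m, ∀ a ∈ skewPow x m, 1 ≤ a ∧ a ≤ m * M := by
  intro m
  induction m with
  | zero => simp [skewPow]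
  | succ m ih =>
    intro a ha
    rw [skewPow, skewSum, List.mem_append] at ha
    rw [Nat.succ_mul]
    rcases ha with ha | ha
    · rw [List.mem_map] at ha
      obtain ⟨b, hb', rfl⟩ := ha
      rw [maxVal_skewPow hx hM]
      have h1 := hb b hb'
      have h2 := hM ▸ le_maxVal hb'
      omega
    · have := ih a ha
      omega

lemma mem_dirPow {x : List ℕ} {M : ℕ} (hM : maxVal x = M)
    (hb : ∀ a ∈ x, 1 ≤ a) :
    ∀ m, ∀ a ∈ dirPow x m, 1 ≤ a ∧ a ≤ m * M := by
  intro m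
  induction m with
  | zero => simp [dirPow]
  | succ m ih =>
    intro a ha
    rw [dirPow, directSum, List.mem_append] at ha
    rw [Nat.succ_mul]
    rcases ha with ha | ha
    · have h1 := hb a ha
      have h2 := hM ▸ le_maxVal ha
      omega
    · rw [List.mem_map] at ha
      obtain ⟨b, hb', rfl⟩ := ha
      have := ih b hb'
      rw [hM]
      omega

lemma nodup_skewPow {x : List ℕ} {M : ℕ} (hx : x ≠ []) (hM : maxVal x = M)
    (hb : ∀ a ∈ x, 1 ≤ a) (hnd : x.Nodup) :
    ∀ m, (skewPow x m).Nodup := by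
  intro m
  induction m with
  | zero => simp [skewPow]
  | succ m ih =>
    rw [skewPow, skewSum]
    refine List.Nodup.append ?_ ih ?_
    · exact hnd.map fun a b h => by omega
    · intro a ha hb'
      rw [List.mem_map] at ha
      obtain ⟨c, hc, rfl⟩ := ha
      have h1 := hb c hc
      have h2 := (mem_skewPow hx hM hb m _ hb').2
      rw [maxVal_skewPow hx hM] at *
      omega

lemma nodup_dirPow {x : List ℕ} {M : ℕ} (hx : x ≠ []) (hM : maxVal x = M)
    (hb : ∀ a ∈ x, 1 ≤ a) (hnd : x.Nodup) :
    ∀ m, (dirPow x m).Nodup := by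
  intro m
  induction m with
  | zero => simp [dirPow]
  | succ m ih =>
    rw [dirPow, directSum]
    refine List.Nodup.append hnd (ih.map fun a b h => by omega) ?_
    · intro a ha hb'
      rw [List.mem_map] at hb'
      obtain ⟨c, hc, rfl⟩ := hb'
      have h1 := (mem_dirPow hM hb m c hc).1
      have h2 := hM ▸ le_maxVal ha
      omega

open List

/-- An increasing sublist of a skew power is confined to one copy's value window. -/
lemma inc_skew {x : List ℕ} {M : ℕ} (hx : x ≠ []) (hM : maxVal x = M)
    (hb : ∀ a ∈ x, 1 ≤ a) {m : ℕ} {u : List ℕ}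
    (hu : u <+ skewPow x m) (hc : u.Chain' (· < ·)) :
    u = [] ∨ ∃ j, ∀ a ∈ u, j * M < a ∧ a ≤ (j + 1) * M := by
  induction m generalizing u with
  | zero => left; simpa [skewPow] using hu
  | succ m ih =>
    rw [skewPow, skewSum] at hu
    obtain ⟨p, q, rfl, hp, hq⟩ := List.sublist_append_iff.1 hu
    rw [List.Chain', List.isChain_append] at hc
    have hpmem : ∀ a ∈ p, m * M < a ∧ a ≤ (m + 1) * M := by
      intro a ha
      have ha' := hp.mem ha
      rw [List.mem_map] at ha'
      obtain ⟨c, hc', rfl⟩ := ha'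
      have := hb c hc'
      have := hM ▸ le_maxVal hc'
      rw [maxVal_skewPow hx hM, Nat.succ_mul]
      omega
    rcases List.eq_nil_or_concat p with rfl | ⟨p', pa, rfl⟩
    <;> simp -failIfUnchanged only [List.concat_eq_append] at *
    · simp only [List.nil_append]
      exact ih hq hc.2.1
    · rcases q with _ | ⟨qa, q'⟩
      · rw [List.append_nil]
        right; exact ⟨m, hpmem⟩
      · exfalso
        have h1 := hc.2.2 pa (by simp) qa (by simp)
        have h2 := (hpmem pa (by simp)).1
        have h3 := (mem_skewPow hx hM hb m qa (hq.mem (by simp))).2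
        omega

/-- A decreasing sublist of a direct power is confined to one copy's value window. -/
lemma dec_dir {x : List ℕ} {M : ℕ} (hM : maxVal x = M)
    (hb : ∀ a ∈ x, 1 ≤ a) {m : ℕ} {u : List ℕ}
    (hu : u <+ dirPow x m) (hc : u.Chain' (· > ·)) :
    u = [] ∨ ∃ j, ∀ a ∈ u, j * M < a ∧ a ≤ (j + 1) * M := by
  induction m generalizing u with
  | zero => left; simpa [dirPow] using hu
  | succ m ih =>
    rw [dirPow, directSum] at hu
    obtain ⟨p, q, rfl, hp, hq⟩ := List.sublist_append_iff.1 hu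
    rw [List.Chain', List.isChain_append] at hc
    have hqmem : ∀ a ∈ q, M < a := by
      intro a ha
      have ha' := hq.mem ha
      rw [List.mem_map] at ha'
      obtain ⟨c, hc', rfl⟩ := ha'
      have := (mem_dirPow hM hb m c hc').1
      rw [hM]; omega
    rcases List.eq_nil_or_concat p with rfl | ⟨p', pa, rfl⟩
    <;> simp -failIfUnchanged only [List.concat_eq_append] at *
    · simp only [List.nil_append]
      -- q is a sublist of shifted dirPow; unmap and recurse
      obtain ⟨q', hq', rfl⟩ := List.sublist_map_iff.1 hq
      have hc' : q'.Chain' (· > ·) := by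
        rw [List.isChain_map] at hc
        exact hc.2.1.imp (fun a b h => by omega)
      rcases ih hq' hc' with rfl | ⟨j, hj⟩
      · left; rfl
      · right
        refine ⟨j + 1, ?_⟩
        intro a ha
        rw [List.mem_map] at ha
        obtain ⟨c, hc', rfl⟩ := ha
        have := hj c hc'
        have e1 : (j+1)*M = j*M+M := Nat.succ_mul _ _
        have e2 : (j+1+1)*M = (j+1)*M+M := Nat.succ_mul _ _
        rw [hM]
        omega
    · rcases q with _ | ⟨qa, q'⟩
      · rw [List.append_nil]
        right
        refine ⟨0, ?_⟩
        intro a ha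
        have h1 := hb a (hp.mem ha)
        have h2 := hM ▸ le_maxVal (hp.mem ha)
        omega
      · exfalso
        have h1 := hc.2.2 pa (by simp) qa (by simp)
        have h2 := hqmem qa (by simp)
        have h3 := hM ▸ le_maxVal (hp.mem (show pa ∈ p' ++ [pa] by simp))
        omega

/-- Confinement: a sublist of a skew power with values in copy `j`'s window is a
shifted sublist of `x`. -/
lemma conf_skew {x : List ℕ} {M : ℕ} (hx : x ≠ []) (hM : maxVal x = M) (hMpos : 0 < M)
    (hb : ∀ a ∈ x, 1 ≤ a) {m : ℕ} {u : List ℕ} {j : ℕ}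
    (hu : u <+ skewPow x m) (hw : ∀ a ∈ u, j * M < a ∧ a ≤ (j + 1) * M) :
    ∃ u', u' <+ x ∧ u = u'.map (· + j * M) := by
  induction m generalizing u with
  | zero =>
    have : u = [] := by simpa [skewPow] using hu
    exact ⟨[], List.nil_sublist _, by simp [this]⟩
  | succ m ih =>
    rw [skewPow, skewSum, maxVal_skewPow hx hM] at hu
    obtain ⟨p, q, rfl, hp, hq⟩ := List.sublist_append_iff.1 hu
    rcases List.eq_nil_or_concat p with rfl | ⟨p', pa, hp2⟩
    · rw [List.nil_append] at *
      exact ih hq hw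
    · subst hp2
      simp only [List.concat_eq_append] at hp hq hw ⊢
      have hpa' := hp.mem (show pa ∈ p' ++ [pa] by simp)
      rw [List.mem_map] at hpa'
      obtain ⟨c, hc', he⟩ := hpa'
      have hc1 := hb c hc'
      have hc2 := hM ▸ le_maxVal hc'
      have hwpa := hw pa (by simp)
      have e1 : (j+1)*M = j*M+M := Nat.succ_mul _ _
      have hjm : j = m := by
        rcases Nat.lt_trichotomy j m with h | h | h
        · exfalso
          have : (j+1) * M ≤ m * M := Nat.mul_le_mul_right M (by omega)
          omega
        · exact h
        · exfalso
          have : (m+1) * M ≤ j * M := Nat.mul_le_mul_right M (by omega)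
          rw [Nat.succ_mul] at this
          omega
      subst hjm
      have hqnil : q = [] := by
        rcases q with _ | ⟨qa, q'⟩
        · rfl
        · exfalso
          have h1 := (hw qa (by simp)).1
          have h2 := (mem_skewPow hx hM hb _ qa (hq.mem (by simp))).2
          omega
      subst hqnil
      rw [List.append_nil] at *
      obtain ⟨u', hu', hre⟩ := List.sublist_map_iff.1 hp
      exact ⟨u', hu', hre⟩

/-- Confinement for direct powers. -/
lemma conf_dir {x : List ℕ} {M : ℕ} (hM : maxVal x = M) (hMpos : 0 < M)
    (hb : ∀ a ∈ x, 1 ≤ a) {m : ℕ} {u : List ℕ} {j : ℕ}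
    (hu : u <+ dirPow x m) (hw : ∀ a ∈ u, j * M < a ∧ a ≤ (j + 1) * M) :
    ∃ u', u' <+ x ∧ u = u'.map (· + j * M) := by
  induction m generalizing u j with
  | zero =>
    have : u = [] := by simpa [dirPow] using hu
    exact ⟨[], List.nil_sublist _, by simp [this]⟩
  | succ m ih =>
    rw [dirPow, directSum] at hu
    obtain ⟨p, q, rfl, hp, hq⟩ := List.sublist_append_iff.1 hu
    rcases Nat.eq_zero_or_pos j with rfl | hj
    · have hqnil : q = [] := by
        rcases q with _ | ⟨qa, q'⟩
        · rfl
        · exfalso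
          have h2 := (hw qa (by simp)).2
          have ha' := hq.mem (show qa ∈ qa :: q' by simp)
          rw [List.mem_map] at ha'
          obtain ⟨c, hc', he⟩ := ha'
          have := (mem_dirPow hM hb m c hc').1
          rw [hM] at he
          omega
      subst hqnil
      rw [List.append_nil] at *
      exact ⟨p, hp, by simp⟩
    · have hpnil : p = [] := by
        rcases List.eq_nil_or_concat p with rfl | ⟨p', pa, hp2⟩
        · rfl
        · exfalso
          subst hp2
          simp only [List.concat_eq_append] at hp hw
          have h1 := (hw pa (by simp)).1
          have h2 := hM ▸ le_maxVal (hp.mem (show pa ∈ p' ++ [pa] by simp))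
          have : 1 * M ≤ j * M := Nat.mul_le_mul_right M hj
          omega
      subst hpnil
      rw [List.nil_append] at *
      obtain ⟨q', hq', rfl⟩ := List.sublist_map_iff.1 hq
      obtain ⟨j, rfl⟩ : ∃ j', j = j' + 1 := ⟨j - 1, by omega⟩
      have hw' : ∀ a ∈ q', j * M < a ∧ a ≤ (j + 1) * M := by
        intro a ha
        have hthis := hw (a + maxVal x) (List.mem_map_of_mem ha)
        rw [hM] at hthis
        have e1 : (j+1)*M = j*M+M := Nat.succ_mul _ _
        have e2 : (j+1+1)*M = (j+1)*M+M := Nat.succ_mul _ _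
        omega
      obtain ⟨u', hu', rfl⟩ := ih hq' hw'
      refine ⟨u', hu', ?_⟩
      rw [List.map_map, hM]
      congr 1
      funext a
      simp only [Function.comp_apply]
      have e1 : (j+1)*M = j*M+M := Nat.succ_mul _ _
      omega

lemma dec_of_inc_sublist {u v : List ℕ} (hu : u <+ v) (hv : v.Chain' (· < ·))
    (hc : u.Chain' (· > ·)) : u.length ≤ 1 := by
  rcases u with _ | ⟨a, _ | ⟨b, t⟩⟩
  · simp
  · simp
  · exfalso
    have h1 : a < b := by
      have := (List.isChain_iff_pairwise.1 hv).sublist hu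
      exact List.rel_of_pairwise_cons this (by simp)
    have h2 : a > b := hc.rel_head
    omega

/-- Decreasing sublists of a skew power of an increasing list have length at most `m`. -/
lemma dec_skew_len {x : List ℕ} (hinc : x.Chain' (· < ·)) {m : ℕ} {u : List ℕ}
    (hu : u <+ skewPow x m) (hc : u.Chain' (· > ·)) : u.length ≤ m := by
  induction m generalizing u with
  | zero =>
    have : u = [] := by simpa [skewPow] using hu
    simp [this]
  | succ m ih =>
    rw [skewPow, skewSum] at hu
    obtain ⟨p, q, rfl, hp, hq⟩ := List.sublist_append_iff.1 hu
    rw [List.Chain', List.isChain_append] at hc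
    have hxinc : (x.map (· + maxVal (skewPow x m))).Chain' (· < ·) := by
      rw [List.Chain', List.isChain_map]
      exact hinc.imp fun a b h => by omega
    have h1 := dec_of_inc_sublist hp hxinc hc.1
    have h2 := ih hq hc.2.1
    simp only [List.length_append]
    omega

/-- In a skew power of an increasing list (with values in `(0, M]`), a decreasing
sublist has strictly decreasing block numbers `(a-1)/M`. -/
lemma dec_skew_blocks {x : List ℕ} {M : ℕ} (hx : x ≠ []) (hM : maxVal x = M)
    (hMpos : 0 < M) (hb : ∀ a ∈ x, 1 ≤ a) (hinc : x.Chain' (· < ·))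
    {m : ℕ} {u : List ℕ}
    (hu : u <+ skewPow x m) (hc : u.Chain' (· > ·)) :
    u.Chain' (fun a b => (b - 1) / M < (a - 1) / M) := by
  induction m generalizing u with
  | zero =>
    have : u = [] := by simpa [skewPow] using hu
    simp [this, List.Chain']
  | succ m ih =>
    rw [skewPow, skewSum] at hu
    obtain ⟨p, q, rfl, hp, hq⟩ := List.sublist_append_iff.1 hu
    rw [List.Chain', List.isChain_append] at hc
    have hxinc : (x.map (· + maxVal (skewPow x m))).Chain' (· < ·) := by
      rw [List.Chain', List.isChain_map]
      exact hinc.imp fun a b h => by omega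
    have hplen := dec_of_inc_sublist hp hxinc hc.1
    have hpblock : ∀ a ∈ p, (a - 1) / M = m := by
      intro a ha
      have ha' := hp.mem ha
      rw [List.mem_map] at ha'
      obtain ⟨c, hc', rfl⟩ := ha'
      rw [maxVal_skewPow hx hM]
      have h1 := hb c hc'
      have h2 := hM ▸ le_maxVal hc'
      have : c + m * M - 1 = (c - 1) + m * M := by omega
      rw [this, Nat.add_mul_div_right _ _ hMpos, Nat.div_eq_of_lt (by omega)]
      omega
    have hqblock : ∀ a ∈ q, (a - 1) / M < m := by
      intro a ha
      have h := mem_skewPow hx hM hb m a (hq.mem ha)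
      have : a - 1 < m * M := by omega
      exact Nat.div_lt_of_lt_mul (by rw [Nat.mul_comm M m]; omega)
    rw [List.Chain', List.isChain_append]
    refine ⟨?_, ih hq hc.2.1, ?_⟩
    · rcases p with _ | ⟨a, _ | ⟨b, t⟩⟩
      · simp
      · simp
      · simp at hplen
    · intro a ha b hb'
      have h1 := hpblock a (List.mem_of_mem_getLast? ha)
      have h2 := hqblock b (List.mem_of_mem_head? hb')
      omega

/-- Gap lemma: along a chain with strictly increasing `f`, `f` grows at least by one
per step. -/
lemma chain_gap {f : ℕ → ℕ} : ∀ {l : List ℕ}, l.Chain' (fun a b => f a < f b) →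
    ∀ h : l ≠ [], f (l.head h) + (l.length - 1) ≤ f (l.getLast h) := by
  intro l
  induction l with
  | nil => intro _ h; simp at h
  | cons a t ih =>
    intro hc _
    rcases t with _ | ⟨b, t⟩
    · simp
    · have h1 : f a < f b := hc.rel_head
      have h2 := ih hc.tail (by simp)
      simp only [List.head_cons, List.length_cons, List.getLast_cons (by simp : b :: t ≠ [])] at *
      omega

/-- If every increasing sublist of any `L`-aligned shift of `x` has constant block
number `(a-1)/L`, then an increasing sublist of `dirPow x m` (shifted) whose block
numbers strictly increase has length at most `m`. -/
lemma inc_dir_len {x : List ℕ} {L M : ℕ} (hM : maxVal x = M) (hLM : L ∣ M)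
    (HSB : ∀ S, L ∣ S → ∀ w, w <+ x.map (· + S) → w.Chain' (· < ·) →
      ∀ a ∈ w, ∀ b ∈ w, (a - 1) / L = (b - 1) / L) :
    ∀ {m : ℕ} {S : ℕ} {u : List ℕ}, L ∣ S → u <+ (dirPow x m).map (· + S) →
      u.Chain' (· < ·) → u.Chain' (fun a b => (a - 1) / L < (b - 1) / L) →
      u.length ≤ m := by
  intro m
  induction m with
  | zero =>
    intro S u _ hu _ _
    have : u = [] := by simpa [dirPow] using hu
    simp [this]
  | succ m ih =>
    intro S u hS hu hc hbl
    rw [dirPow, directSum, hM, List.map_append, List.map_map] at hu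
    have hfe : ((fun a => a + S) ∘ fun a => a + M) = (fun a => a + (S + M)) := by
      funext a; simp [Function.comp]; omega
    rw [hfe] at hu
    obtain ⟨p, q, rfl, hp, hq⟩ := List.sublist_append_iff.1 hu
    rw [List.Chain', List.isChain_append] at hc hbl
    have hplen : p.length ≤ 1 := by
      rcases p with _ | ⟨a, _ | ⟨b, t⟩⟩
      · simp
      · simp
      · exfalso
        have heq := HSB S hS _ hp hc.1 a (by simp) b (by simp)
        have hlt := hbl.1.rel_head
        omega
    have hqlen := ih (Dvd.dvd.add hS hLM) hq hc.2.1 hbl.2.1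
    simp only [List.length_append]
    omega

lemma stdz_eq (u : List ℕ) :
    stdz u = u.map (fun x => (u.toFinset.filter (· < x)).card) := by
  unfold stdz
  congr 1
  funext x
  rw [← List.card_toFinset, List.toFinset_filter]
  simp

lemma g_mono (u : List ℕ) {x y : ℕ} (h : y ≤ x) :
    (u.toFinset.filter (· < y)).card ≤ (u.toFinset.filter (· < x)).card := by
  apply Finset.card_le_card
  intro a ha
  simp only [Finset.mem_filter] at *
  exact ⟨ha.1, by omega⟩

lemma g_strict (u : List ℕ) {x y : ℕ} (hx : x ∈ u) (hxy : x < y) :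
    (u.toFinset.filter (· < x)).card < (u.toFinset.filter (· < y)).card := by
  apply Finset.card_lt_card
  constructor
  · intro a ha
    simp only [Finset.mem_filter] at *
    exact ⟨ha.1, by omega⟩
  · intro hsub
    have hmem : x ∈ u.toFinset.filter (· < y) := by
      simp only [Finset.mem_filter]
      exact ⟨List.mem_toFinset.2 hx, by simpa using hxy⟩
    have := hsub hmem
    simp at this

lemma g_inj (u : List ℕ) {x y : ℕ} (hx : x ∈ u) (hy : y ∈ u)
    (h : (u.toFinset.filter (· < x)).card = (u.toFinset.filter (· < y)).card) : x = y := by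
  rcases Nat.lt_trichotomy x y with hl | hl | hl
  · have := g_strict u hx hl; omega
  · exact hl
  · have := g_strict u hy hl; omega

lemma g_ord (u : List ℕ) {x y : ℕ} (hx : x ∈ u) (hy : y ∈ u)
    (h : (u.toFinset.filter (· < x)).card < (u.toFinset.filter (· < y)).card) : x < y := by
  rcases Nat.lt_trichotomy x y with hl | hl | hl
  · exact hl
  · subst hl; omega
  · have := g_mono u (le_of_lt hl); omega

lemma map_get_eq {g : ℕ → ℕ} {w : List ℕ} {k : ℕ} (hmap : w.map g = List.range (k + 1))
    {i : ℕ} (hi : i < w.length) : g (w[i]'hi) = i := by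
  have h2 := congrArg (fun l => l[i]?) hmap
  have hil : i < k + 1 := by
    have := congrArg List.length hmap; simp at this; omega
  simp only [List.getElem?_map, List.getElem?_range, hil, if_pos,
    List.getElem?_eq_getElem hi] at h2
  simpa using h2

lemma half_v {g : ℕ → ℕ} {u w : List ℕ} {k : ℕ} (hwu : ∀ a ∈ w, a ∈ u)
    (hmap : w.map g = List.range (k + 1)) :
    ∀ i ≤ k, w.getD i 0 ∈ u ∧ g (w.getD i 0) = i := by
  have hlen : w.length = k + 1 := by
    have := congrArg List.length hmap
    simpa using this
  intro i hi
  have hil : i < w.length := by omega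
  rw [List.getD_eq_getElem?_getD, List.getElem?_eq_getElem hil, Option.getD_some]
  exact ⟨hwu _ (List.get_mem w ⟨i, hil⟩), map_get_eq hmap hil⟩

lemma half_struct {g : ℕ → ℕ} {u w : List ℕ} {k : ℕ} {v : ℕ → ℕ}
    (hwu : ∀ a ∈ w, a ∈ u)
    (hginj : ∀ x ∈ u, ∀ y ∈ u, g x = g y → x = y)
    (hv : ∀ i ≤ k, v i ∈ u ∧ g (v i) = i)
    (hmap : w.map g = List.range (k + 1)) :
    w = List.ofFn (fun i : Fin (k + 1) => v i) := by
  have hlen : w.length = k + 1 := by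
    have := congrArg List.length hmap
    simpa using this
  apply List.ext_get (by simp [hlen])
  intro i h1 h2
  have hik : i ≤ k := by omega
  have hg : g (w.get ⟨i, h1⟩) = i := map_get_eq hmap h1
  rw [List.get_ofFn]
  show w.get ⟨i, h1⟩ = v i
  exact hginj _ (hwu _ (List.get_mem _ _)) _ (hv i hik).1 (by rw [hg, (hv i hik).2])

lemma split_exact {w₁ w₂ W₁ W₂ : List ℕ} (hsub : w₁ ++ w₂ <+ W₁ ++ W₂)
    (h1 : W₁.Nodup) (h2 : W₂.Nodup) (hvals : ∀ a, a ∈ w₁ ↔ a ∈ w₂) :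
    w₁ <+ W₁ ∧ w₂ <+ W₂ := by
  obtain ⟨x, y, hxy, hx, hy⟩ := List.sublist_append_iff.1 hsub
  rcases List.append_eq_append_iff.1 hxy with ⟨t, rfl, rfl⟩ | ⟨t, rfl, rfl⟩
  · -- x = w₁ ++ t, w₂ = t ++ y
    rcases t with _ | ⟨c, t'⟩
    · exact ⟨by simpa using hx, by simpa using hy⟩
    · exfalso
      have hc1 : c ∈ w₁ := (hvals c).2 (by simp)
      have hcount : 2 ≤ (w₁ ++ c :: t').count c := by
        rw [List.count_append]
        have hpos := List.count_pos_iff.2 hc1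
        simp only [List.count_cons_self]
        omega
      have hle := hx.count_le c
      have hnd := List.nodup_iff_count_le_one.1 h1 c
      omega
  · -- w₁ = x ++ t, y = t ++ w₂
    rcases t with _ | ⟨c, t'⟩
    · exact ⟨by simpa using hx, by simpa using hy⟩
    · exfalso
      have hc2 : c ∈ w₂ := (hvals c).1 (by simp)
      have hcount : 2 ≤ ((c :: t') ++ w₂).count c := by
        rw [List.count_append]
        have hpos := List.count_pos_iff.2 hc2
        simp only [List.count_cons_self]
        omega
      have hle := hy.count_le c
      have hnd := List.nodup_iff_count_le_one.1 h2 c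
      omega

lemma dirPow_one : ∀ m, dirPow [1] m = List.range' 1 m := by
  intro m
  induction m with
  | zero => simp [dirPow]
  | succ m ih =>
    rw [dirPow, directSum, ih]
    have hmax : maxVal [1] = 1 := by simp [maxVal]
    rw [hmax, List.range'_succ]
    have : (List.range' 1 m).map (· + 1) = List.range' 2 m := by
      have := List.map_add_range' (a := 1) 1 m 1
      simpa [Nat.add_comm] using this
    simp [this]

section Cases

variable {n : ℕ}

lemma range'_facts (m : ℕ) (hm : 1 ≤ m) :
    List.range' 1 m ≠ [] ∧ maxVal (List.range' 1 m) = m ∧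
      (∀ a ∈ List.range' 1 m, 1 ≤ a) ∧ (List.range' 1 m).Chain' (· < ·) ∧
      (List.range' 1 m).Nodup := by
  refine ⟨?_, ?_, ?_, ?_, List.nodup_range'⟩
  · intro h
    have h2 : (List.range' 1 m).length = 0 := by rw [h]; rfl
    rw [List.length_range'] at h2
    omega
  · refine maxVal_eq (fun a ha => ?_) ?_
    · have := List.mem_range'_1.1 ha; omega
    · exact List.mem_range'_1.2 ⟨hm, by omega⟩
  · exact fun a ha => (List.mem_range'_1.1 ha).1
  · exact List.isChain_iff_pairwise.2 List.pairwise_lt_range'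

/-- Confinement of a sublist of `B` with values in an `n²`-aligned window down to
a shifted copy of `r`. -/
lemma conf_to_r (hn : 1 ≤ n) {w : List ℕ} {k : ℕ}
    (hw : w <+ dirPow (skewPow (skewPow (List.range' 1 n) n) n) n)
    (hwin : ∀ a ∈ w, k * (n*n) < a ∧ a ≤ (k+1) * (n*n)) :
    ∃ t, t <+ skewPow (List.range' 1 n) n ∧ w = t.map (· + k * (n*n)) := by
  obtain ⟨hx0ne, hx0max, hx0mem, hx0chain, hx0nd⟩ := range'_facts n hn
  set x0 := List.range' 1 n
  set r := skewPow x0 n with hr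
  set C := skewPow r n with hC
  have hrne : r ≠ [] := skewPow_ne_nil hx0ne hn
  have hrmax : maxVal r = n * n := maxVal_skewPow hx0ne hx0max n
  have hrmem : ∀ a ∈ r, 1 ≤ a := fun a ha => (mem_skewPow hx0ne hx0max hx0mem n a ha).1
  have hCne : C ≠ [] := skewPow_ne_nil hrne hn
  have hCmax : maxVal C = n * (n * n) := maxVal_skewPow hrne hrmax n
  have hCmem : ∀ a ∈ C, 1 ≤ a := fun a ha => (mem_skewPow hrne hrmax hrmem n a ha).1
  have hn2 : 0 < n * n := by positivity
  have hn3 : 0 < n * (n * n) := by positivity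
  set c := k / n with hc
  set k' := k % n with hk'
  have hk : n * (k / n) + k % n = k := Nat.div_add_mod k n
  have hkn : k' < n := Nat.mod_lt _ hn
  have key : k * (n * n) = c * (n * (n * n)) + k' * (n * n) := by
    conv_lhs => rw [← hk]
    ring
  have e1 : (k + 1) * (n * n) = k * (n * n) + n * n := Nat.succ_mul _ _
  have e2 : (c + 1) * (n * (n * n)) = c * (n * (n * n)) + n * (n * n) := Nat.succ_mul _ _
  have e5 : (k' + 1) * (n * n) = k' * (n * n) + n * n := Nat.succ_mul _ _
  have e4 : (k' + 1) * (n * n) ≤ n * (n * n) := by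
    have : (k' + 1) * (n * n) ≤ n * (n * n) := Nat.mul_le_mul_right _ (by omega)
    exact this
  have hwin' : ∀ a ∈ w, c * (n * (n * n)) < a ∧ a ≤ (c + 1) * (n * (n * n)) := by
    intro a ha
    have := hwin a ha
    omega
  obtain ⟨t₁, ht₁, rfl⟩ := conf_dir hCmax hn3 hCmem hw hwin'
  have hwin₁ : ∀ a ∈ t₁, k' * (n*n) < a ∧ a ≤ (k' + 1) * (n*n) := by
    intro a ha
    have := hwin _ (List.mem_map_of_mem ha)
    omega
  obtain ⟨t, ht, rfl⟩ := conf_skew hrne hrmax hn2 hrmem ht₁ hwin₁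
  refine ⟨t, ht, ?_⟩
  rw [List.map_map]
  congr 1
  funext a
  simp only [Function.comp_apply]
  omega

lemma case_II (hn : 1 ≤ n) {s : List ℕ} (hchain : s.Chain' (· < ·))
    (hlen : s.length = n + 1)
    (hA : s <+ skewPow (List.range' 1 (n*n)) (n*n))
    (hB : s <+ dirPow (skewPow (skewPow (List.range' 1 n) n) n) n) : False := by
  obtain ⟨hx1ne, hx1max, hx1mem, hx1chain, hx1nd⟩ := range'_facts (n*n) (by nlinarith)
  obtain ⟨hx0ne, hx0max, hx0mem, hx0chain, hx0nd⟩ := range'_facts n hn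
  have hsne : s ≠ [] := by intro h; rw [h] at hlen; simp at hlen
  rcases inc_skew hx1ne hx1max hx1mem hA hchain with rfl | ⟨k, hk⟩
  · exact hsne rfl
  obtain ⟨t, ht, rfl⟩ := conf_to_r hn hB hk
  have htc : t.Chain' (· < ·) := by
    rw [List.Chain', List.isChain_map] at hchain
    exact hchain.imp fun a b h => by omega
  have htlen : t.length = n + 1 := by simpa using hlen
  have htne : t ≠ [] := by intro h; rw [h] at htlen; simp at htlen
  rcases inc_skew hx0ne hx0max hx0mem ht htc with rfl | ⟨j, hj⟩
  · exact htne rfl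
  have hgap := chain_gap (f := fun a => a) htc htne
  have hh := hj _ (List.head_mem htne)
  have hl := hj _ (List.getLast_mem htne)
  have e : (j + 1) * n = j * n + n := Nat.succ_mul _ _
  rw [htlen] at hgap
  omega

lemma case_IR (hn : 1 ≤ n) {s : List ℕ} (hchain : s.Chain' (· < ·))
    (hlen : s.length = n + 1)
    (hA : s <+ skewPow (List.range' 1 (n*n)) (n*n))
    (hB : s.reverse <+ dirPow (skewPow (skewPow (List.range' 1 n) n) n) n) : False := by
  obtain ⟨hx1ne, hx1max, hx1mem, hx1chain, hx1nd⟩ := range'_facts (n*n) (by nlinarith)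
  obtain ⟨hx0ne, hx0max, hx0mem, hx0chain, hx0nd⟩ := range'_facts n hn
  have hsne : s ≠ [] := by intro h; rw [h] at hlen; simp at hlen
  rcases inc_skew hx1ne hx1max hx1mem hA hchain with rfl | ⟨k, hk⟩
  · exact hsne rfl
  have hk' : ∀ a ∈ s.reverse, k * (n*n) < a ∧ a ≤ (k+1) * (n*n) := by
    intro a ha; exact hk a (List.mem_reverse.1 ha)
  obtain ⟨t, ht, hmap⟩ := conf_to_r hn hB hk'
  have hrc : s.reverse.Chain' (· > ·) := by
    rw [List.Chain', List.isChain_reverse]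
    exact hchain.imp fun a b h => h
  have htc : t.Chain' (· > ·) := by
    rw [hmap, List.Chain', List.isChain_map] at hrc
    exact hrc.imp fun a b h => by omega
  have htlen : t.length = n + 1 := by
    have h2 := congrArg List.length hmap
    simp [hlen] at h2
    omega
  have := dec_skew_len hx0chain ht htc
  omega

lemma case_RI (hn : 1 ≤ n) {s : List ℕ} (hchain : s.Chain' (· < ·))
    (hlen : s.length = n + 1)
    (hA : s.reverse <+ skewPow (List.range' 1 (n*n)) (n*n))
    (hB : s <+ dirPow (skewPow (skewPow (List.range' 1 n) n) n) n) : False := by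
  obtain ⟨hx1ne, hx1max, hx1mem, hx1chain, hx1nd⟩ := range'_facts (n*n) (by nlinarith)
  obtain ⟨hx0ne, hx0max, hx0mem, hx0chain, hx0nd⟩ := range'_facts n hn
  set x0 := List.range' 1 n
  set r := skewPow x0 n with hr
  set C := skewPow r n with hC
  have hrne : r ≠ [] := skewPow_ne_nil hx0ne hn
  have hrmax : maxVal r = n * n := maxVal_skewPow hx0ne hx0max n
  have hrmem : ∀ a ∈ r, 1 ≤ a := fun a ha => (mem_skewPow hx0ne hx0max hx0mem n a ha).1
  have hCne : C ≠ [] := skewPow_ne_nil hrne hn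
  have hCmax : maxVal C = n * (n * n) := maxVal_skewPow hrne hrmax n
  have hCmem : ∀ a ∈ C, 1 ≤ a := fun a ha => (mem_skewPow hrne hrmax hrmem n a ha).1
  have hn2 : 0 < n * n := by positivity
  -- blocks strictly increase along s
  have hrc : s.reverse.Chain' (· > ·) := by
    rw [List.Chain', List.isChain_reverse]
    exact hchain.imp fun a b h => h
  have hbl' := dec_skew_blocks hx1ne hx1max hn2 hx1mem hx1chain hA hrc
  rw [List.Chain', List.isChain_reverse] at hbl'
  have hbl : s.Chain' (fun a b => (a - 1) / (n*n) < (b - 1) / (n*n)) :=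
    hbl'.imp fun a b h => h
  -- increasing sublists of aligned shifts of C have constant block
  have HSB : ∀ S, (n*n) ∣ S → ∀ w, w <+ C.map (· + S) → w.Chain' (· < ·) →
      ∀ a ∈ w, ∀ b ∈ w, (a - 1) / (n*n) = (b - 1) / (n*n) := by
    intro S hS w hw hc
    obtain ⟨d, rfl⟩ := hS
    obtain ⟨w₀, hw₀, rfl⟩ := List.sublist_map_iff.1 hw
    have hc₀ : w₀.Chain' (· < ·) := by
      rw [List.Chain', List.isChain_map] at hc
      exact hc.imp fun a b h => by omega
    rcases inc_skew hrne hrmax hrmem hw₀ hc₀ with rfl | ⟨j, hj⟩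
    · simp
    · have hblock : ∀ a₀ ∈ w₀, (a₀ + n * n * d - 1) / (n*n) = j + d := by
        intro a₀ ha₀
        have hj' := hj a₀ ha₀
        have e1 : (j + 1) * (n*n) = j * (n*n) + n*n := Nat.succ_mul _ _
        have h2 : a₀ + n * n * d - 1 = (a₀ - 1) + (n*n) * d := by omega
        rw [h2, Nat.add_mul_div_left _ _ hn2]
        have : (a₀ - 1) / (n*n) = j := Nat.div_eq_of_lt_le (by omega) (by omega)
        omega
      intro a ha b hb
      rw [List.mem_map] at ha hb
      obtain ⟨a₀, ha₀, rfl⟩ := ha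
      obtain ⟨b₀, hb₀, rfl⟩ := hb
      rw [hblock a₀ ha₀, hblock b₀ hb₀]
  have hLM : (n*n) ∣ (n * (n*n)) := ⟨n, by ring⟩
  have hu0 : s <+ (dirPow C n).map (· + 0) := by
    have : (dirPow C n).map (· + 0) = dirPow C n := by simp
    rw [this]
    exact hB
  have := inc_dir_len hCmax hLM HSB (dvd_zero _) hu0 hchain hbl
  omega

lemma case_RR (hn : 1 ≤ n) {s : List ℕ} (hchain : s.Chain' (· < ·))
    (hlen : s.length = n + 1)
    (hA : s.reverse <+ skewPow (List.range' 1 (n*n)) (n*n))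
    (hB : s.reverse <+ dirPow (skewPow (skewPow (List.range' 1 n) n) n) n) : False := by
  obtain ⟨hx1ne, hx1max, hx1mem, hx1chain, hx1nd⟩ := range'_facts (n*n) (by nlinarith)
  obtain ⟨hx0ne, hx0max, hx0mem, hx0chain, hx0nd⟩ := range'_facts n hn
  set x0 := List.range' 1 n
  set r := skewPow x0 n with hr
  set C := skewPow r n with hC
  have hrne : r ≠ [] := skewPow_ne_nil hx0ne hn
  have hrmax : maxVal r = n * n := maxVal_skewPow hx0ne hx0max n
  have hrmem : ∀ a ∈ r, 1 ≤ a := fun a ha => (mem_skewPow hx0ne hx0max hx0mem n a ha).1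
  have hrne' : r ≠ [] := hrne
  have hCmax : maxVal C = n * (n * n) := maxVal_skewPow hrne hrmax n
  have hCmem : ∀ a ∈ C, 1 ≤ a := fun a ha => (mem_skewPow hrne hrmax hrmem n a ha).1
  have hn2 : 0 < n * n := by positivity
  have hsne : s ≠ [] := by intro h; rw [h] at hlen; simp at hlen
  have hrc : s.reverse.Chain' (· > ·) := by
    rw [List.Chain', List.isChain_reverse]
    exact hchain.imp fun a b h => h
  have hbl' := dec_skew_blocks hx1ne hx1max hn2 hx1mem hx1chain hA hrc
  rw [List.Chain', List.isChain_reverse] at hbl'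
  have hbl : s.Chain' (fun a b => (a - 1) / (n*n) < (b - 1) / (n*n)) :=
    hbl'.imp fun a b h => h
  rcases dec_dir hCmax hCmem hB hrc with hnil | ⟨c, hc⟩
  · rw [List.reverse_eq_nil_iff] at hnil
    exact hsne hnil
  · have hcs : ∀ a ∈ s, c * (n * (n*n)) < a ∧ a ≤ (c+1) * (n * (n*n)) := by
      intro a ha
      exact hc a (List.mem_reverse.2 ha)
    have hgap := chain_gap hbl hsne
    rw [hlen] at hgap
    have hh := hcs _ (List.head_mem hsne)
    have hl := hcs _ (List.getLast_mem hsne)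
    -- block bounds
    have hbh : c * n ≤ (s.head hsne - 1) / (n*n) := by
      rw [Nat.le_div_iff_mul_le hn2]
      have : c * n * (n * n) = c * (n * (n*n)) := by ring
      omega
    have hbl2 : (s.getLast hsne - 1) / (n*n) < c * n + n := by
      rw [Nat.div_lt_iff_lt_mul hn2]
      have e2 : (c + 1) * (n * (n*n)) = c * (n*(n*n)) + n * (n*n) := Nat.succ_mul _ _
      have : (c * n + n) * (n * n) = c * (n * (n*n)) + n * (n*n) := by ring
      omega
    omega

lemma ofFn_chain' {v : ℕ → ℕ} {n : ℕ} (hmono : ∀ i j, i < j → j ≤ n → v i < v j) :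
    (List.ofFn (fun i : Fin (n+1) => v i)).Chain' (· < ·) := by
  rw [List.Chain', List.isChain_iff_pairwise, List.pairwise_iff_get]
  intro i j hij
  rw [List.get_ofFn, List.get_ofFn]
  have hj : (j : ℕ) < n + 1 := by
    have := j.isLt
    simpa using this
  exact hmono _ _ (by simpa using hij) (by simp; omega)

end Cases

theorem stmt_9 (n : ℕ) :
    ∀ e₁ ∈ ({id, List.reverse} : Set (List ℕ → List ℕ)),
      ∀ e₂ ∈ ({id, List.reverse} : Set (List ℕ → List ℕ)),
        ¬ Contains (skewPow (List.range' 1 (n ^ 2)) (n ^ 2) ++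
            dirPow (skewPow (skewPow (dirPow [1] n) n) n) n)
          (e₁ (List.range (n + 1)) ++ e₂ (List.range (n + 1))) := by
  intro e₁ he₁ e₂ he₂ hcon
  simp only [Set.mem_insert_iff, Set.mem_singleton_iff] at he₁ he₂
  obtain ⟨u, hu, hstd⟩ := hcon
  rcases Nat.eq_zero_or_pos n with rfl | hn
  · -- n = 0: the word is empty but the pattern is not
    have hunil : u = [] := by
      have : u <+ ([] : List ℕ) := by simpa [skewPow, dirPow] using hu
      simpa using this
    subst hunil
    have hL := congrArg List.length hstd
    simp only [stdz, List.map_nil, List.length_nil, List.length_append] at hL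
    rcases he₁ with rfl | rfl <;> rcases he₂ with rfl | rfl <;> simp at hL
  · rw [pow_two, dirPow_one] at hu
    have hmapu : u.map (fun x => (u.toFinset.filter (· < x)).card)
        = e₁ (List.range (n + 1)) ++ e₂ (List.range (n + 1)) := by
      rw [← stdz_eq]; exact hstd
    -- word structure facts
    obtain ⟨hx1ne, hx1max, hx1mem, hx1chain, hx1nd⟩ := range'_facts (n*n) (by nlinarith)
    obtain ⟨hx0ne, hx0max, hx0mem, hx0chain, hx0nd⟩ := range'_facts n hn
    have hrne : skewPow (List.range' 1 n) n ≠ [] := skewPow_ne_nil hx0ne hn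
    have hrmax : maxVal (skewPow (List.range' 1 n) n) = n * n :=
      maxVal_skewPow hx0ne hx0max n
    have hrmem : ∀ a ∈ skewPow (List.range' 1 n) n, 1 ≤ a :=
      fun a ha => (mem_skewPow hx0ne hx0max hx0mem n a ha).1
    have hrnd := nodup_skewPow hx0ne hx0max hx0mem hx0nd n
    have hCne : skewPow (skewPow (List.range' 1 n) n) n ≠ [] := skewPow_ne_nil hrne hn
    have hCmax : maxVal (skewPow (skewPow (List.range' 1 n) n) n) = n * (n * n) :=
      maxVal_skewPow hrne hrmax n
    have hCmem : ∀ a ∈ skewPow (skewPow (List.range' 1 n) n) n, 1 ≤ a :=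
      fun a ha => (mem_skewPow hrne hrmax hrmem n a ha).1
    have hCnd := nodup_skewPow hrne hrmax hrmem hrnd n
    have hAnd := nodup_skewPow hx1ne hx1max hx1mem hx1nd (n*n)
    have hBnd := nodup_dirPow hCne hCmax hCmem hCnd n
    -- split u into halves
    set g : ℕ → ℕ := fun x => (u.toFinset.filter (· < x)).card with hg
    have hginj : ∀ x ∈ u, ∀ y ∈ u, g x = g y → x = y := fun x hx y hy h => g_inj u hx hy h
    have hP1len : (List.range (n+1)).length = n + 1 := by simp
    have hPRlen : ((List.range (n+1)).reverse).length = n + 1 := by simp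
    set w₁ := u.take (n+1) with hw₁
    set w₂ := u.drop (n+1) with hw₂
    have hw1u : ∀ a ∈ w₁, a ∈ u := fun a ha => (List.take_sublist _ u).mem ha
    have hw2u : ∀ a ∈ w₂, a ∈ u := fun a ha => (List.drop_sublist _ u).mem ha
    have huapp : w₁ ++ w₂ = u := List.take_append_drop _ u
    have hu' : w₁ ++ w₂ <+ skewPow (List.range' 1 (n*n)) (n*n) ++
        dirPow (skewPow (skewPow (List.range' 1 n) n) n) n := by rw [huapp]; exact hu
    rcases he₁ with rfl | rfl <;> rcases he₂ with rfl | rfl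
    -- Case id, id
    · simp only [id_eq] at hmapu
      have hw1map : w₁.map g = List.range (n+1) := by
        rw [hw₁, List.map_take, hmapu, List.take_left' hP1len]
      have hw2map : w₂.map g = List.range (n+1) := by
        rw [hw₂, List.map_drop, hmapu, List.drop_left' hP1len]
      set v : ℕ → ℕ := fun i => w₁.getD i 0 with hvdef
      have hv : ∀ i ≤ n, v i ∈ u ∧ g (v i) = i := half_v hw1u hw1map
      have hw1s : w₁ = List.ofFn (fun i : Fin (n+1) => v i) :=
        half_struct hw1u hginj hv hw1map
      have hw2s : w₂ = List.ofFn (fun i : Fin (n+1) => v i) :=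
        half_struct hw2u hginj hv hw2map
      have hvmono : ∀ i j, i < j → j ≤ n → v i < v j := by
        intro i j hij hj
        exact g_ord u (hv i (by omega)).1 (hv j hj).1
          (by show g (v i) < g (v j); rw [(hv i (by omega)).2, (hv j hj).2]; exact hij)
      have hchain := ofFn_chain' hvmono
      have hslen : (List.ofFn (fun i : Fin (n+1) => v i)).length = n + 1 := by simp
      have hvals : ∀ a, a ∈ w₁ ↔ a ∈ w₂ := by rw [hw1s, hw2s]; exact fun a => Iff.rfl
      obtain ⟨h1, h2⟩ := split_exact hu' hAnd hBnd hvals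
      rw [hw1s] at h1
      rw [hw2s] at h2
      exact case_II hn hchain hslen h1 h2
    -- Case id, rev
    · simp only [id_eq] at hmapu
      have hw1map : w₁.map g = List.range (n+1) := by
        rw [hw₁, List.map_take, hmapu, List.take_left' hP1len]
      have hw2map : w₂.map g = (List.range (n+1)).reverse := by
        rw [hw₂, List.map_drop, hmapu, List.drop_left' hP1len]
      have hw2rmap : w₂.reverse.map g = List.range (n+1) := by
        rw [List.map_reverse, hw2map, List.reverse_reverse]
      have hw2ru : ∀ a ∈ w₂.reverse, a ∈ u := fun a ha => hw2u a (List.mem_reverse.1 ha)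
      set v : ℕ → ℕ := fun i => w₁.getD i 0 with hvdef
      have hv : ∀ i ≤ n, v i ∈ u ∧ g (v i) = i := half_v hw1u hw1map
      have hw1s : w₁ = List.ofFn (fun i : Fin (n+1) => v i) :=
        half_struct hw1u hginj hv hw1map
      have hw2s : w₂ = (List.ofFn (fun i : Fin (n+1) => v i)).reverse := by
        have := half_struct hw2ru hginj hv hw2rmap
        rw [← this, List.reverse_reverse]
      have hvmono : ∀ i j, i < j → j ≤ n → v i < v j := by
        intro i j hij hj
        exact g_ord u (hv i (by omega)).1 (hv j hj).1
          (by show g (v i) < g (v j); rw [(hv i (by omega)).2, (hv j hj).2]; exact hij)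
      have hchain := ofFn_chain' hvmono
      have hslen : (List.ofFn (fun i : Fin (n+1) => v i)).length = n + 1 := by simp
      have hvals : ∀ a, a ∈ w₁ ↔ a ∈ w₂ := by
        rw [hw1s, hw2s]; exact fun a => (List.mem_reverse).symm
      obtain ⟨h1, h2⟩ := split_exact hu' hAnd hBnd hvals
      rw [hw1s] at h1
      rw [hw2s] at h2
      exact case_IR hn hchain hslen h1 h2
    -- Case rev, id
    · simp only [id_eq] at hmapu
      have hw1map : w₁.map g = (List.range (n+1)).reverse := by
        rw [hw₁, List.map_take, hmapu, List.take_left' hPRlen]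
      have hw2map : w₂.map g = List.range (n+1) := by
        rw [hw₂, List.map_drop, hmapu, List.drop_left' hPRlen]
      have hw1rmap : w₁.reverse.map g = List.range (n+1) := by
        rw [List.map_reverse, hw1map, List.reverse_reverse]
      have hw1ru : ∀ a ∈ w₁.reverse, a ∈ u := fun a ha => hw1u a (List.mem_reverse.1 ha)
      set v : ℕ → ℕ := fun i => w₁.reverse.getD i 0 with hvdef
      have hv : ∀ i ≤ n, v i ∈ u ∧ g (v i) = i := half_v hw1ru hw1rmap
      have hw1s : w₁ = (List.ofFn (fun i : Fin (n+1) => v i)).reverse := by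
        have := half_struct hw1ru hginj hv hw1rmap
        rw [← this, List.reverse_reverse]
      have hw2s : w₂ = List.ofFn (fun i : Fin (n+1) => v i) :=
        half_struct hw2u hginj hv hw2map
      have hvmono : ∀ i j, i < j → j ≤ n → v i < v j := by
        intro i j hij hj
        exact g_ord u (hv i (by omega)).1 (hv j hj).1
          (by show g (v i) < g (v j); rw [(hv i (by omega)).2, (hv j hj).2]; exact hij)
      have hchain := ofFn_chain' hvmono
      have hslen : (List.ofFn (fun i : Fin (n+1) => v i)).length = n + 1 := by simp
      have hvals : ∀ a, a ∈ w₁ ↔ a ∈ w₂ := by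
        rw [hw1s, hw2s]; exact fun a => List.mem_reverse
      obtain ⟨h1, h2⟩ := split_exact hu' hAnd hBnd hvals
      rw [hw1s] at h1
      rw [hw2s] at h2
      exact case_RI hn hchain hslen h1 h2
    -- Case rev, rev
    · have hw1map : w₁.map g = (List.range (n+1)).reverse := by
        rw [hw₁, List.map_take, hmapu, List.take_left' hPRlen]
      have hw2map : w₂.map g = (List.range (n+1)).reverse := by
        rw [hw₂, List.map_drop, hmapu, List.drop_left' hPRlen]
      have hw1rmap : w₁.reverse.map g = List.range (n+1) := by
        rw [List.map_reverse, hw1map, List.reverse_reverse]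
      have hw2rmap : w₂.reverse.map g = List.range (n+1) := by
        rw [List.map_reverse, hw2map, List.reverse_reverse]
      have hw1ru : ∀ a ∈ w₁.reverse, a ∈ u := fun a ha => hw1u a (List.mem_reverse.1 ha)
      have hw2ru : ∀ a ∈ w₂.reverse, a ∈ u := fun a ha => hw2u a (List.mem_reverse.1 ha)
      set v : ℕ → ℕ := fun i => w₁.reverse.getD i 0 with hvdef
      have hv : ∀ i ≤ n, v i ∈ u ∧ g (v i) = i := half_v hw1ru hw1rmap
      have hw1s : w₁ = (List.ofFn (fun i : Fin (n+1) => v i)).reverse := by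
        have := half_struct hw1ru hginj hv hw1rmap
        rw [← this, List.reverse_reverse]
      have hw2s : w₂ = (List.ofFn (fun i : Fin (n+1) => v i)).reverse := by
        have := half_struct hw2ru hginj hv hw2rmap
        rw [← this, List.reverse_reverse]
      have hvmono : ∀ i j, i < j → j ≤ n → v i < v j := by
        intro i j hij hj
        exact g_ord u (hv i (by omega)).1 (hv j hj).1
          (by show g (v i) < g (v j); rw [(hv i (by omega)).2, (hv j hj).2]; exact hij)
      have hchain := ofFn_chain' hvmono
      have hslen : (List.ofFn (fun i : Fin (n+1) => v i)).length = n + 1 := by simp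
      have hvals : ∀ a, a ∈ w₁ ↔ a ∈ w₂ := by rw [hw1s, hw2s]; exact fun a => Iff.rfl
      obtain ⟨h1, h2⟩ := split_exact hu' hAnd hBnd hvals
      rw [hw1s] at h1
      rw [hw2s] at h2
      exact case_RR hn hchain hslen h1 h2
end

section
/- There exists a word with n^6 repeats that contains none of the following patterns: 000; 0011...nn; nn...1100; and (01...n)^{e1}(01...n)^{e2} for e1,e2 ∈ {id, rev}. -/
namespace S11

lemma enc_lt_dest {m a b a' b' : ℕ} (hb : b < m) (hb' : b' < m)
    (h : a*m+b < a'*m+b') : a < a' ∨ (a = a' ∧ b < b') := by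
  rcases Nat.lt_trichotomy a a' with h1 | h1 | h1
  · exact Or.inl h1
  · subst h1; exact Or.inr ⟨rfl, Nat.lt_of_add_lt_add_left h⟩
  · exfalso
    have : a'*m + b' < a*m + b := by
      calc a'*m + b' < a'*m + m := by omega
        _ = (a'+1)*m := by ring
        _ ≤ a*m := Nat.mul_le_mul_right m h1
        _ ≤ a*m + b := Nat.le_add_right _ _
    omega

lemma enc_div {m x y : ℕ} (hy : y < m) : (x*m + y)/m = x := by
  have hm : 0 < m := by omega
  rw [Nat.add_comm, Nat.mul_comm, Nat.add_mul_div_left _ _ hm, Nat.div_eq_of_lt hy, Nat.zero_add]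

lemma enc_mod {m x y : ℕ} (hy : y < m) : (x*m + y) % m = y := by
  rw [Nat.add_comm, Nat.mul_comm, Nat.add_mul_mod_self_left, Nat.mod_eq_of_lt hy]

lemma enc_eq_dest {m a b a' b' : ℕ} (hb : b < m) (hb' : b' < m)
    (h : a*m+b = a'*m+b') : a = a' ∧ b = b' := by
  have h1 : a = a' := by rw [← enc_div (x := a) hb, ← enc_div (x := a') hb', h]
  have h2 : b = b' := by rw [← enc_mod (x := a) hb, ← enc_mod (x := a') hb', h]
  exact ⟨h1, h2⟩

lemma enc_lt_intro {m a b a' b' : ℕ} (hb : b < m) (h : a < a') : a*m+b < a'*m+b' := by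
  calc a*m + b < a*m + m := by omega
    _ = (a+1)*m := by ring
    _ ≤ a'*m := Nat.mul_le_mul_right m h
    _ ≤ a'*m + b' := Nat.le_add_right _ _

def V6v (n a1 a2 a3 a4 a5 a6 : ℕ) : ℕ := ((((a1*n+a2)*n+a3)*n+a4)*n+a5)*n+a6
def P7v (n t s h c1 c2 c3 c4 : ℕ) : ℕ := (((((t*n+s)*2+h)*n+c1)*n+c2)*n+c3)*n+c4

lemma V6_lt_dest {n a1 a2 a3 a4 a5 a6 b1 b2 b3 b4 b5 b6 : ℕ}
    (ha2 : a2 < n) (ha3 : a3 < n) (ha4 : a4 < n) (ha5 : a5 < n) (ha6 : a6 < n)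
    (hb2 : b2 < n) (hb3 : b3 < n) (hb4 : b4 < n) (hb5 : b5 < n) (hb6 : b6 < n)
    (h : V6v n a1 a2 a3 a4 a5 a6 < V6v n b1 b2 b3 b4 b5 b6) :
    a1 < b1 ∨ (a1 = b1 ∧ a2 < b2) ∨ (a1 = b1 ∧ a2 = b2 ∧ a3 < b3) ∨
    (a1 = b1 ∧ a2 = b2 ∧ a3 = b3 ∧ a4 < b4) ∨
    (a1 = b1 ∧ a2 = b2 ∧ a3 = b3 ∧ a4 = b4 ∧ a5 < b5) ∨
    (a1 = b1 ∧ a2 = b2 ∧ a3 = b3 ∧ a4 = b4 ∧ a5 = b5 ∧ a6 < b6) := by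
  unfold V6v at h
  rcases enc_lt_dest ha6 hb6 h with h | ⟨e5, h⟩
  · rcases enc_lt_dest ha5 hb5 h with h | ⟨e4, h⟩
    · rcases enc_lt_dest ha4 hb4 h with h | ⟨e3, h⟩
      · rcases enc_lt_dest ha3 hb3 h with h | ⟨e2, h⟩
        · rcases enc_lt_dest ha2 hb2 h with h | ⟨e1, h⟩
          · omega
          · omega
        · obtain ⟨e1, e2'⟩ := enc_eq_dest ha2 hb2 e2
          omega
      · obtain ⟨e2, e3'⟩ := enc_eq_dest ha3 hb3 e3
        obtain ⟨e1, e2'⟩ := enc_eq_dest ha2 hb2 e2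
        omega
    · obtain ⟨e3, e4'⟩ := enc_eq_dest ha4 hb4 e4
      obtain ⟨e2, e3'⟩ := enc_eq_dest ha3 hb3 e3
      obtain ⟨e1, e2'⟩ := enc_eq_dest ha2 hb2 e2
      omega
  · obtain ⟨e4, e5'⟩ := enc_eq_dest ha5 hb5 e5
    obtain ⟨e3, e4'⟩ := enc_eq_dest ha4 hb4 e4
    obtain ⟨e2, e3'⟩ := enc_eq_dest ha3 hb3 e3
    obtain ⟨e1, e2'⟩ := enc_eq_dest ha2 hb2 e2
    omega

set_option maxHeartbeats 2000000 in
lemma P7_lt_dest {n t s h c1 c2 c3 c4 t' s' h' c1' c2' c3' c4' : ℕ}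
    (hs : s < n) (hh : h < 2) (hc1 : c1 < n) (hc2 : c2 < n) (hc3 : c3 < n) (hc4 : c4 < n)
    (hs' : s' < n) (hh' : h' < 2) (hc1' : c1' < n) (hc2' : c2' < n) (hc3' : c3' < n) (hc4' : c4' < n)
    (hlt : P7v n t s h c1 c2 c3 c4 < P7v n t' s' h' c1' c2' c3' c4') :
    t < t' ∨ (t = t' ∧ s < s') ∨ (t = t' ∧ s = s' ∧ h < h') ∨
    (t = t' ∧ s = s' ∧ h = h' ∧ c1 < c1') ∨
    (t = t' ∧ s = s' ∧ h = h' ∧ c1 = c1' ∧ c2 < c2') ∨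
    (t = t' ∧ s = s' ∧ h = h' ∧ c1 = c1' ∧ c2 = c2' ∧ c3 < c3') ∨
    (t = t' ∧ s = s' ∧ h = h' ∧ c1 = c1' ∧ c2 = c2' ∧ c3 = c3' ∧ c4 < c4') := by
  unfold P7v at hlt
  rcases enc_lt_dest hc4 hc4' hlt with h0 | ⟨e6, h0⟩
  · rcases enc_lt_dest hc3 hc3' h0 with h0 | ⟨e5, h0⟩
    · rcases enc_lt_dest hc2 hc2' h0 with h0 | ⟨e4, h0⟩
      · rcases enc_lt_dest hc1 hc1' h0 with h0 | ⟨e3, h0⟩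
        · rcases enc_lt_dest hh hh' h0 with h0 | ⟨e2, h0⟩
          · rcases enc_lt_dest hs hs' h0 with h0 | ⟨e1, h0⟩
            · omega
            · omega
          · obtain ⟨e1, e2'⟩ := enc_eq_dest hs hs' e2
            omega
        · obtain ⟨e2, e3'⟩ := enc_eq_dest hh hh' e3
          obtain ⟨e1, e2'⟩ := enc_eq_dest hs hs' e2
          omega
      · obtain ⟨e3, e4'⟩ := enc_eq_dest hc1 hc1' e4
        obtain ⟨e2, e3'⟩ := enc_eq_dest hh hh' e3
        obtain ⟨e1, e2'⟩ := enc_eq_dest hs hs' e2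
        omega
    · obtain ⟨e4, e5'⟩ := enc_eq_dest hc2 hc2' e5
      obtain ⟨e3, e4'⟩ := enc_eq_dest hc1 hc1' e4
      obtain ⟨e2, e3'⟩ := enc_eq_dest hh hh' e3
      obtain ⟨e1, e2'⟩ := enc_eq_dest hs hs' e2
      omega
  · obtain ⟨e5, e6'⟩ := enc_eq_dest hc3 hc3' e6
    obtain ⟨e4, e5'⟩ := enc_eq_dest hc2 hc2' e5
    obtain ⟨e3, e4'⟩ := enc_eq_dest hc1 hc1' e4
    obtain ⟨e2, e3'⟩ := enc_eq_dest hh hh' e3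
    obtain ⟨e1, e2'⟩ := enc_eq_dest hs hs' e2
    omega


-- value digit extractors
def dv1 (n v : ℕ) : ℕ := v / n^5
def dv2 (n v : ℕ) : ℕ := v / n^4 % n
def dv3 (n v : ℕ) : ℕ := v / n^3 % n
def dv4 (n v : ℕ) : ℕ := v / n^2 % n
def dv5 (n v : ℕ) : ℕ := v / n % n
def dv6 (n v : ℕ) : ℕ := v % n

-- position digit extractors
def pdt (n i : ℕ) : ℕ := i / (2*n^5)
def pds (n i : ℕ) : ℕ := i / (2*n^4) % n
def pdh (n i : ℕ) : ℕ := i / n^4 % 2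
def pdc1 (n i : ℕ) : ℕ := i / n^3 % n
def pdc2 (n i : ℕ) : ℕ := i / n^2 % n
def pdc3 (n i : ℕ) : ℕ := i / n % n
def pdc4 (n i : ℕ) : ℕ := i % n

lemma dd2 (i n : ℕ) : i / n / n = i / n^2 := by
  rw [Nat.div_div_eq_div_mul]; ring_nf
lemma dd3 (i n : ℕ) : i / n^2 / n = i / n^3 := by
  rw [Nat.div_div_eq_div_mul]; ring_nf
lemma dd4 (i n : ℕ) : i / n^3 / n = i / n^4 := by
  rw [Nat.div_div_eq_div_mul]; ring_nf
lemma dd5 (i n : ℕ) : i / n^4 / n = i / n^5 := by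
  rw [Nat.div_div_eq_div_mul]; ring_nf
lemma ddh (i n : ℕ) : i / n^4 / 2 = i / (2*n^4) := by
  rw [Nat.div_div_eq_div_mul]; ring_nf
lemma dds (i n : ℕ) : i / (2*n^4) / n = i / (2*n^5) := by
  rw [Nat.div_div_eq_div_mul]; ring_nf

lemma val_decomp (n v : ℕ) :
    v = V6v n (dv1 n v) (dv2 n v) (dv3 n v) (dv4 n v) (dv5 n v) (dv6 n v) := by
  unfold V6v dv1 dv2 dv3 dv4 dv5 dv6
  rw [← dd5, Nat.div_add_mod' (v / n^4) n, ← dd4, Nat.div_add_mod' (v / n^3) n,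
    ← dd3, Nat.div_add_mod' (v / n^2) n, ← dd2, Nat.div_add_mod' (v / n) n,
    Nat.div_add_mod' v n]

lemma pos_decomp (n i : ℕ) :
    i = P7v n (pdt n i) (pds n i) (pdh n i) (pdc1 n i) (pdc2 n i) (pdc3 n i) (pdc4 n i) := by
  unfold P7v pdt pds pdh pdc1 pdc2 pdc3 pdc4
  rw [← dds, Nat.div_add_mod' (i / (2*n^4)) n, ← ddh, Nat.div_add_mod' (i / n^4) 2,
    ← dd4, Nat.div_add_mod' (i / n^3) n, ← dd3, Nat.div_add_mod' (i / n^2) n,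
    ← dd2, Nat.div_add_mod' (i / n) n, Nat.div_add_mod' i n]

lemma dv_bounds {n v : ℕ} (hn : 0 < n) (hv : v < n^6) :
    dv1 n v < n ∧ dv2 n v < n ∧ dv3 n v < n ∧ dv4 n v < n ∧ dv5 n v < n ∧ dv6 n v < n := by
  refine ⟨?_, Nat.mod_lt _ hn, Nat.mod_lt _ hn, Nat.mod_lt _ hn, Nat.mod_lt _ hn, Nat.mod_lt _ hn⟩
  unfold dv1
  rw [Nat.div_lt_iff_lt_mul (by positivity)]
  calc v < n^6 := hv
    _ = n * n^5 := by ring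

lemma pos_bounds {n i : ℕ} (hn : 0 < n) (hi : i < 2*n^6) :
    pdt n i < n ∧ pds n i < n ∧ pdh n i < 2 ∧
    pdc1 n i < n ∧ pdc2 n i < n ∧ pdc3 n i < n ∧ pdc4 n i < n := by
  refine ⟨?_, Nat.mod_lt _ hn, Nat.mod_lt _ (by norm_num), Nat.mod_lt _ hn,
    Nat.mod_lt _ hn, Nat.mod_lt _ hn, Nat.mod_lt _ hn⟩
  unfold pdt
  rw [Nat.div_lt_iff_lt_mul (by positivity)]
  calc i < 2*n^6 := hi
    _ = n * (2*n^5) := by ring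

-- extraction of digits from V6v
lemma dv_V6 {n a1 a2 a3 a4 a5 a6 : ℕ}
    (h2 : a2 < n) (h3 : a3 < n) (h4 : a4 < n) (h5 : a5 < n) (h6 : a6 < n) :
    dv1 n (V6v n a1 a2 a3 a4 a5 a6) = a1 ∧ dv2 n (V6v n a1 a2 a3 a4 a5 a6) = a2 ∧
    dv3 n (V6v n a1 a2 a3 a4 a5 a6) = a3 ∧ dv4 n (V6v n a1 a2 a3 a4 a5 a6) = a4 ∧
    dv5 n (V6v n a1 a2 a3 a4 a5 a6) = a5 ∧ dv6 n (V6v n a1 a2 a3 a4 a5 a6) = a6 := by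
  have e1 : V6v n a1 a2 a3 a4 a5 a6 / n = (((a1*n+a2)*n+a3)*n+a4)*n+a5 := enc_div h6
  have e2 : V6v n a1 a2 a3 a4 a5 a6 / n^2 = ((a1*n+a2)*n+a3)*n+a4 := by
    rw [← dd2, e1]; exact enc_div h5
  have e3 : V6v n a1 a2 a3 a4 a5 a6 / n^3 = (a1*n+a2)*n+a3 := by
    rw [← dd3, e2]; exact enc_div h4
  have e4 : V6v n a1 a2 a3 a4 a5 a6 / n^4 = a1*n+a2 := by
    rw [← dd4, e3]; exact enc_div h3
  have e5 : V6v n a1 a2 a3 a4 a5 a6 / n^5 = a1 := by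
    rw [← dd5, e4]; exact enc_div h2
  refine ⟨e5, ?_, ?_, ?_, ?_, enc_mod h6⟩
  · rw [dv2, e4]; exact enc_mod h2
  · rw [dv3, e3]; exact enc_mod h3
  · rw [dv4, e2]; exact enc_mod h4
  · rw [dv5, e1]; exact enc_mod h5

-- extraction of digits from P7v
lemma pd_P7 {n t s h c1 c2 c3 c4 : ℕ}
    (hs : s < n) (hh : h < 2) (h1 : c1 < n) (h2 : c2 < n) (h3 : c3 < n) (h4 : c4 < n) :
    pdt n (P7v n t s h c1 c2 c3 c4) = t ∧ pds n (P7v n t s h c1 c2 c3 c4) = s ∧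
    pdh n (P7v n t s h c1 c2 c3 c4) = h ∧ pdc1 n (P7v n t s h c1 c2 c3 c4) = c1 ∧
    pdc2 n (P7v n t s h c1 c2 c3 c4) = c2 ∧ pdc3 n (P7v n t s h c1 c2 c3 c4) = c3 ∧
    pdc4 n (P7v n t s h c1 c2 c3 c4) = c4 := by
  have e1 : P7v n t s h c1 c2 c3 c4 / n = ((((t*n+s)*2+h)*n+c1)*n+c2)*n+c3 := enc_div h4
  have e2 : P7v n t s h c1 c2 c3 c4 / n^2 = (((t*n+s)*2+h)*n+c1)*n+c2 := by
    rw [← dd2, e1]; exact enc_div h3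
  have e3 : P7v n t s h c1 c2 c3 c4 / n^3 = ((t*n+s)*2+h)*n+c1 := by
    rw [← dd3, e2]; exact enc_div h2
  have e4 : P7v n t s h c1 c2 c3 c4 / n^4 = (t*n+s)*2+h := by
    rw [← dd4, e3]; exact enc_div h1
  have e5 : P7v n t s h c1 c2 c3 c4 / (2*n^4) = t*n+s := by
    rw [← ddh, e4]; exact enc_div hh
  have e6 : P7v n t s h c1 c2 c3 c4 / (2*n^5) = t := by
    rw [← dds, e5]; exact enc_div hs
  refine ⟨e6, ?_, ?_, ?_, ?_, ?_, enc_mod h4⟩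
  · rw [pds, e5]; exact enc_mod hs
  · rw [pdh, e4]; exact enc_mod hh
  · rw [pdc1, e3]; exact enc_mod h1
  · rw [pdc2, e2]; exact enc_mod h2
  · rw [pdc3, e1]; exact enc_mod h3

lemma step_lt {x A c n : ℕ} (hx : x < A) (hc : c < n) : x*n + c < A*n := by
  calc x*n + c < x*n + n := by omega
    _ = (x+1)*n := by ring
    _ ≤ A*n := Nat.mul_le_mul_right n hx

lemma V6_lt_pow {n a1 a2 a3 a4 a5 a6 : ℕ}
    (h1 : a1 < n) (h2 : a2 < n) (h3 : a3 < n) (h4 : a4 < n) (h5 : a5 < n) (h6 : a6 < n) :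
    V6v n a1 a2 a3 a4 a5 a6 < n^6 := by
  have e1 : a1*n+a2 < n*n := step_lt h1 h2
  have e2 : (a1*n+a2)*n+a3 < n*n*n := step_lt e1 h3
  have e3 : ((a1*n+a2)*n+a3)*n+a4 < n*n*n*n := step_lt e2 h4
  have e4 : (((a1*n+a2)*n+a3)*n+a4)*n+a5 < n*n*n*n*n := step_lt e3 h5
  have e5 : V6v n a1 a2 a3 a4 a5 a6 < n*n*n*n*n*n := step_lt e4 h6
  calc V6v n a1 a2 a3 a4 a5 a6 < n*n*n*n*n*n := e5
    _ = n^6 := by ring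

lemma P7_lt_pow {n t s h c1 c2 c3 c4 : ℕ}
    (ht : t < n) (hs : s < n) (hh : h < 2) (h1 : c1 < n) (h2 : c2 < n) (h3 : c3 < n) (h4 : c4 < n) :
    P7v n t s h c1 c2 c3 c4 < 2*n^6 := by
  have e1 : t*n+s < n*n := step_lt ht hs
  have e2 : (t*n+s)*2+h < (n*n)*2 := step_lt e1 hh
  have e3 : ((t*n+s)*2+h)*n+c1 < (n*n)*2*n := step_lt e2 h1
  have e4 : (((t*n+s)*2+h)*n+c1)*n+c2 < (n*n)*2*n*n := step_lt e3 h2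
  have e5 : ((((t*n+s)*2+h)*n+c1)*n+c2)*n+c3 < (n*n)*2*n*n*n := step_lt e4 h3
  have e6 : P7v n t s h c1 c2 c3 c4 < (n*n)*2*n*n*n*n := step_lt e5 h4
  calc P7v n t s h c1 c2 c3 c4 < (n*n)*2*n*n*n*n := e6
    _ = 2*n^6 := by ring

def pos0 (n v : ℕ) : ℕ :=
  P7v n (n-1-dv1 n v) (dv2 n v) 0 (n-1-dv3 n v) (n-1-dv4 n v) (dv5 n v) (dv6 n v)
def pos1 (n v : ℕ) : ℕ :=
  P7v n (n-1-dv1 n v) (dv2 n v) 1 (dv3 n v) (n-1-dv4 n v) (n-1-dv5 n v) (dv6 n v)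
def fv (n i : ℕ) : ℕ :=
  if pdh n i = 0 then
    V6v n (n-1-pdt n i) (pds n i) (n-1-pdc1 n i) (n-1-pdc2 n i) (pdc3 n i) (pdc4 n i)
  else
    V6v n (n-1-pdt n i) (pds n i) (pdc1 n i) (n-1-pdc2 n i) (n-1-pdc3 n i) (pdc4 n i)

lemma fv_lt {n i : ℕ} (hn : 0 < n) (hi : i < 2*n^6) : fv n i < n^6 := by
  obtain ⟨b1, b2, b3, b4, b5, b6, b7⟩ := pos_bounds hn hi
  unfold fv
  split
  · exact V6_lt_pow (by omega) b2 (by omega) (by omega) b6 b7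
  · exact V6_lt_pow (by omega) b2 b4 (by omega) (by omega) b7

lemma pos0_lt {n v : ℕ} (hn : 0 < n) (hv : v < n^6) : pos0 n v < 2*n^6 := by
  obtain ⟨b1, b2, b3, b4, b5, b6⟩ := dv_bounds hn hv
  exact P7_lt_pow (by omega) b2 (by omega) (by omega) (by omega) b5 b6

lemma pos1_lt {n v : ℕ} (hn : 0 < n) (hv : v < n^6) : pos1 n v < 2*n^6 := by
  obtain ⟨b1, b2, b3, b4, b5, b6⟩ := dv_bounds hn hv
  exact P7_lt_pow (by omega) b2 (by omega) b3 (by omega) (by omega) b6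

lemma pos0_lt_pos1 {n v : ℕ} (hn : 0 < n) (hv : v < n^6) : pos0 n v < pos1 n v := by
  obtain ⟨b1, b2, b3, b4, b5, b6⟩ := dv_bounds hn hv
  unfold pos0 pos1 P7v
  apply enc_lt_intro b6
  apply enc_lt_intro b5
  apply enc_lt_intro (by omega : n-1-dv4 n v < n)
  apply enc_lt_intro (by omega : n-1-dv3 n v < n)
  exact Nat.add_lt_add_left Nat.zero_lt_one _

lemma fv_pos0 {n v : ℕ} (hn : 0 < n) (hv : v < n^6) : fv n (pos0 n v) = v := by
  obtain ⟨b1, b2, b3, b4, b5, b6⟩ := dv_bounds hn hv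
  obtain ⟨e1, e2, e3, e4, e5, e6, e7⟩ :=
    pd_P7 (n := n) (t := n-1-dv1 n v) (s := dv2 n v) (h := 0) (c1 := n-1-dv3 n v)
      (c2 := n-1-dv4 n v) (c3 := dv5 n v) (c4 := dv6 n v) b2 (by omega) (by omega) (by omega) b5 b6
  unfold fv pos0
  rw [e1, e2, e3, e4, e5, e6, e7]
  simp only [if_pos rfl]
  have r1 : n-1-(n-1-dv1 n v) = dv1 n v := by omega
  have r3 : n-1-(n-1-dv3 n v) = dv3 n v := by omega
  have r4 : n-1-(n-1-dv4 n v) = dv4 n v := by omega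
  rw [r1, r3, r4]
  exact (val_decomp n v).symm

lemma fv_pos1 {n v : ℕ} (hn : 0 < n) (hv : v < n^6) : fv n (pos1 n v) = v := by
  obtain ⟨b1, b2, b3, b4, b5, b6⟩ := dv_bounds hn hv
  obtain ⟨e1, e2, e3, e4, e5, e6, e7⟩ :=
    pd_P7 (n := n) (t := n-1-dv1 n v) (s := dv2 n v) (h := 1) (c1 := dv3 n v)
      (c2 := n-1-dv4 n v) (c3 := n-1-dv5 n v) (c4 := dv6 n v) b2 (by omega) b3 (by omega) (by omega) b6
  unfold fv pos1
  rw [e1, e2, e3, e4, e5, e6, e7]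
  simp only [if_neg (by omega : (1:ℕ) ≠ 0)]
  have r1 : n-1-(n-1-dv1 n v) = dv1 n v := by omega
  have r4 : n-1-(n-1-dv4 n v) = dv4 n v := by omega
  have r5 : n-1-(n-1-dv5 n v) = dv5 n v := by omega
  rw [r1, r4, r5]
  exact (val_decomp n v).symm

lemma decode {n i : ℕ} (hn : 0 < n) (hi : i < 2*n^6) :
    i = pos0 n (fv n i) ∨ i = pos1 n (fv n i) := by
  obtain ⟨b1, b2, b3, b4, b5, b6, b7⟩ := pos_bounds hn hi
  by_cases hh : pdh n i = 0
  · left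
    unfold fv
    rw [if_pos hh]
    obtain ⟨e1, e2, e3, e4, e5, e6⟩ :=
      dv_V6 (n := n) (a1 := n-1-pdt n i) (a2 := pds n i) (a3 := n-1-pdc1 n i)
        (a4 := n-1-pdc2 n i) (a5 := pdc3 n i) (a6 := pdc4 n i) b2 (by omega) (by omega) b6 b7
    unfold pos0
    rw [e1, e2, e3, e4, e5, e6]
    have r1 : n-1-(n-1-pdt n i) = pdt n i := by omega
    have r3 : n-1-(n-1-pdc1 n i) = pdc1 n i := by omega
    have r4 : n-1-(n-1-pdc2 n i) = pdc2 n i := by omega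
    rw [r1, r3, r4, ← hh]
    exact pos_decomp n i
  · right
    unfold fv
    rw [if_neg hh]
    obtain ⟨e1, e2, e3, e4, e5, e6⟩ :=
      dv_V6 (n := n) (a1 := n-1-pdt n i) (a2 := pds n i) (a3 := pdc1 n i)
        (a4 := n-1-pdc2 n i) (a5 := n-1-pdc3 n i) (a6 := pdc4 n i) b2 b4 (by omega) (by omega) b7
    unfold pos1
    rw [e1, e2, e3, e4, e5, e6]
    have r1 : n-1-(n-1-pdt n i) = pdt n i := by omega
    have r4 : n-1-(n-1-pdc2 n i) = pdc2 n i := by omega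
    have r5 : n-1-(n-1-pdc3 n i) = pdc3 n i := by omega
    rw [r1, r4, r5]
    have hh1 : pdh n i = 1 := by omega
    rw [← hh1]
    exact pos_decomp n i

lemma pair_occ {n i j : ℕ} (hn : 0 < n) (hi : i < 2*n^6) (hj : j < 2*n^6)
    (hij : i < j) (hf : fv n i = fv n j) :
    i = pos0 n (fv n i) ∧ j = pos1 n (fv n i) := by
  have hv : fv n i < n^6 := fv_lt hn hi
  rcases decode hn hi with h1 | h1 <;> rcases decode hn hj with h2 | h2 <;> rw [← hf] at h2
  · omega
  · exact ⟨h1, h2⟩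
  · have := pos0_lt_pos1 hn hv; omega
  · omega

lemma vlex {n u v : ℕ} (huv : u < v) :
    V6v n (dv1 n u) (dv2 n u) (dv3 n u) (dv4 n u) (dv5 n u) (dv6 n u) <
    V6v n (dv1 n v) (dv2 n v) (dv3 n v) (dv4 n v) (dv5 n v) (dv6 n v) := by
  rw [← val_decomp, ← val_decomp]; exact huv

set_option maxHeartbeats 2000000 in
lemma lemDU {n u v : ℕ} (hn : 0 < n) (hu : u < n^6) (hv : v < n^6) (huv : u < v)
    (h : pos1 n u < pos0 n v) : dv2 n u < dv2 n v := by
  obtain ⟨a1, a2, a3, a4, a5, a6⟩ := dv_bounds hn hu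
  obtain ⟨b1, b2, b3, b4, b5, b6⟩ := dv_bounds hn hv
  have H1 := V6_lt_dest a2 a3 a4 a5 a6 b2 b3 b4 b5 b6 (vlex huv)
  simp only [pos0, pos1] at h
  have H2 := P7_lt_dest (hlt := h) a2 (by omega) a3 (by omega) (by omega) a6
    b2 (by omega) (by omega) (by omega) b5 b6
  omega

set_option maxHeartbeats 2000000 in
lemma lemDD {n u v : ℕ} (hn : 0 < n) (hu : u < n^6) (hv : v < n^6) (huv : u < v)
    (h : pos1 n v < pos0 n u) : dv1 n u < dv1 n v := by
  obtain ⟨a1, a2, a3, a4, a5, a6⟩ := dv_bounds hn hu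
  obtain ⟨b1, b2, b3, b4, b5, b6⟩ := dv_bounds hn hv
  have H1 := V6_lt_dest a2 a3 a4 a5 a6 b2 b3 b4 b5 b6 (vlex huv)
  simp only [pos0, pos1] at h
  have H2 := P7_lt_dest (hlt := h) b2 (by omega) b3 (by omega) (by omega) b6
    a2 (by omega) (by omega) (by omega) a5 a6
  omega

set_option maxHeartbeats 2000000 in
lemma lemCC {n u v : ℕ} (hn : 0 < n) (hu : u < n^6) (hv : v < n^6) (huv : u < v)
    (h1 : pos0 n u < pos0 n v) (h2 : pos0 n v < pos1 n u) (h3 : pos1 n u < pos1 n v) :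
    dv6 n u < dv6 n v := by
  obtain ⟨a1, a2, a3, a4, a5, a6⟩ := dv_bounds hn hu
  obtain ⟨b1, b2, b3, b4, b5, b6⟩ := dv_bounds hn hv
  have H1 := V6_lt_dest a2 a3 a4 a5 a6 b2 b3 b4 b5 b6 (vlex huv)
  simp only [pos0, pos1] at h1 h2 h3
  have H2 := P7_lt_dest (hlt := h1) a2 (by omega) (by omega) (by omega) a5 a6
    b2 (by omega) (by omega) (by omega) b5 b6
  have H3 := P7_lt_dest (hlt := h2) b2 (by omega) (by omega) (by omega) b5 b6
    a2 (by omega) a3 (by omega) (by omega) a6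
  have H4 := P7_lt_dest (hlt := h3) a2 (by omega) a3 (by omega) (by omega) a6
    b2 (by omega) b3 (by omega) (by omega) b6
  omega

set_option maxHeartbeats 2000000 in
lemma lemCD {n u v : ℕ} (hn : 0 < n) (hu : u < n^6) (hv : v < n^6) (huv : u < v)
    (h1 : pos0 n v < pos0 n u) (h2 : pos1 n v < pos1 n u) (h3 : pos0 n u < pos1 n v) :
    dv4 n u < dv4 n v := by
  obtain ⟨a1, a2, a3, a4, a5, a6⟩ := dv_bounds hn hu
  obtain ⟨b1, b2, b3, b4, b5, b6⟩ := dv_bounds hn hv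
  have H1 := V6_lt_dest a2 a3 a4 a5 a6 b2 b3 b4 b5 b6 (vlex huv)
  simp only [pos0, pos1] at h1 h2 h3
  have H2 := P7_lt_dest (hlt := h1) b2 (by omega) (by omega) (by omega) b5 b6
    a2 (by omega) (by omega) (by omega) a5 a6
  have H3 := P7_lt_dest (hlt := h2) b2 (by omega) b3 (by omega) (by omega) b6
    a2 (by omega) a3 (by omega) (by omega) a6
  have H4 := P7_lt_dest (hlt := h3) a2 (by omega) (by omega) (by omega) a5 a6
    b2 (by omega) b3 (by omega) (by omega) b6
  omega

set_option maxHeartbeats 2000000 in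
lemma lemNI {n u v : ℕ} (hn : 0 < n) (hu : u < n^6) (hv : v < n^6) (huv : u < v)
    (h1 : pos0 n u < pos0 n v) (h2 : pos1 n v < pos1 n u) :
    dv5 n u < dv5 n v := by
  obtain ⟨a1, a2, a3, a4, a5, a6⟩ := dv_bounds hn hu
  obtain ⟨b1, b2, b3, b4, b5, b6⟩ := dv_bounds hn hv
  have H1 := V6_lt_dest a2 a3 a4 a5 a6 b2 b3 b4 b5 b6 (vlex huv)
  simp only [pos0, pos1] at h1 h2
  have H2 := P7_lt_dest (hlt := h1) a2 (by omega) (by omega) (by omega) a5 a6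
    b2 (by omega) (by omega) (by omega) b5 b6
  have H3 := P7_lt_dest (hlt := h2) b2 (by omega) b3 (by omega) (by omega) b6
    a2 (by omega) a3 (by omega) (by omega) a6
  omega

set_option maxHeartbeats 2000000 in
lemma lemND {n u v : ℕ} (hn : 0 < n) (hu : u < n^6) (hv : v < n^6) (huv : u < v)
    (h1 : pos0 n v < pos0 n u) (h2 : pos1 n u < pos1 n v) :
    dv3 n u < dv3 n v := by
  obtain ⟨a1, a2, a3, a4, a5, a6⟩ := dv_bounds hn hu
  obtain ⟨b1, b2, b3, b4, b5, b6⟩ := dv_bounds hn hv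
  have H1 := V6_lt_dest a2 a3 a4 a5 a6 b2 b3 b4 b5 b6 (vlex huv)
  simp only [pos0, pos1] at h1 h2
  have H2 := P7_lt_dest (hlt := h1) b2 (by omega) (by omega) (by omega) b5 b6
    a2 (by omega) (by omega) (by omega) a5 a6
  have H3 := P7_lt_dest (hlt := h2) a2 (by omega) a3 (by omega) (by omega) a6
    b2 (by omega) b3 (by omega) (by omega) b6
  omega

lemma chain_absurd {n : ℕ} (Φ : ℕ → ℕ) (hmono : ∀ k, k < n → Φ k < Φ (k+1))
    (hb : Φ n < n) : False := by
  have key : ∀ k, k ≤ n → k ≤ Φ k := by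
    intro k
    induction k with
    | zero => omega
    | succ m ih => intro hm; have h1 := ih (by omega); have h2 := hmono m (by omega); omega
  have := key n le_rfl
  omega

def W (n : ℕ) : List ℕ := (List.range (2*n^6)).map (fv n)

lemma W_length (n : ℕ) : (W n).length = 2*n^6 := by simp [W]

lemma W_getD {n i : ℕ} (hi : i < 2*n^6) : (W n).getD i 0 = fv n i := by
  rw [List.getD_eq_getElem _ _ (by simpa [W] using hi)]
  simp [W]

def rk (u : List ℕ) (x : ℕ) : ℕ := ((u.filter (· < x)).dedup).length

lemma rk_lt_rk {u : List ℕ} {x y : ℕ} (hx : x ∈ u) (hxy : x < y) : rk u x < rk u y := by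
  have hss : (u.filter (· < x)).toFinset ⊂ (u.filter (· < y)).toFinset := by
    constructor
    · intro z hz
      simp only [List.mem_toFinset, List.mem_filter, decide_eq_true_eq] at hz ⊢
      exact ⟨hz.1, by omega⟩
    · intro hsub
      have hx2 : x ∈ (u.filter (· < y)).toFinset := by
        simp only [List.mem_toFinset, List.mem_filter, decide_eq_true_eq]
        exact ⟨hx, hxy⟩
      have hx3 := hsub hx2
      simp only [List.mem_toFinset, List.mem_filter, decide_eq_true_eq] at hx3
      omega
  have hc := Finset.card_lt_card hss
  unfold rk
  rw [← List.card_toFinset, ← List.card_toFinset]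
  exact hc

lemma rk_lt_iff {u : List ℕ} {x y : ℕ} (hx : x ∈ u) (hy : y ∈ u) :
    rk u x < rk u y ↔ x < y := by
  constructor
  · intro h
    rcases Nat.lt_trichotomy x y with h1 | h1 | h1
    · exact h1
    · subst h1; omega
    · have := rk_lt_rk hy h1; omega
  · exact rk_lt_rk hx

lemma rk_eq_iff {u : List ℕ} {x y : ℕ} (hx : x ∈ u) (hy : y ∈ u) :
    rk u x = rk u y ↔ x = y := by
  constructor
  · intro h
    rcases Nat.lt_trichotomy x y with h1 | h1 | h1
    · have := rk_lt_rk hx h1; omega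
    · exact h1
    · have := rk_lt_rk hy h1; omega
  · intro h; rw [h]

lemma contains_spec {w p : List ℕ} (h : Contains w p) :
    ∃ σ : ℕ → ℕ,
      (∀ i j, i < j → j < p.length → σ i < σ j) ∧
      (∀ i, i < p.length → σ i < w.length) ∧
      (∀ i j, i < p.length → j < p.length →
        ((w.getD (σ i) 0 < w.getD (σ j) 0 ↔ p.getD i 0 < p.getD j 0) ∧
         (w.getD (σ i) 0 = w.getD (σ j) 0 ↔ p.getD i 0 = p.getD j 0))) := by
  obtain ⟨u, hsub, hstd⟩ := h
  have hlen : u.length = p.length := by rw [← hstd]; simp [stdz]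
  obtain ⟨emb, hemb⟩ := List.sublist_iff_exists_fin_orderEmbedding_get_eq.mp hsub
  refine ⟨fun i => if hi : i < u.length then (emb ⟨i, hi⟩ : ℕ) else 0, ?_, ?_, ?_⟩
  · intro i j hij hj
    dsimp only
    rw [dif_pos (show i < u.length by omega), dif_pos (show j < u.length by omega)]
    exact emb.strictMono (show (⟨i, by omega⟩ : Fin u.length) < ⟨j, by omega⟩ from hij)
  · intro i hi
    dsimp only
    rw [dif_pos (show i < u.length by omega)]
    exact (emb ⟨i, by omega⟩).isLt
  · intro i j hi hj
    dsimp only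
    rw [dif_pos (show i < u.length by omega), dif_pos (show j < u.length by omega)]
    have key : ∀ (k : ℕ) (hk : k < u.length),
        w.getD (emb ⟨k, hk⟩ : ℕ) 0 = u.get ⟨k, hk⟩ := by
      intro k hk
      rw [List.getD_eq_getElem _ _ (emb ⟨k, hk⟩).isLt, hemb ⟨k, hk⟩]
      simp [List.get_eq_getElem]
    rw [key i (by omega), key j (by omega)]
    have hpk : ∀ (k : ℕ) (hk : k < u.length), p.getD k 0 = rk u (u.get ⟨k, hk⟩) := by
      intro k hk
      rw [← hstd, List.getD_eq_getElem _ _ (by simpa [stdz] using hk)]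
      simp [stdz, rk, List.get_eq_getElem]
    rw [hpk i (by omega), hpk j (by omega)]
    have hmi : u.get ⟨i, by omega⟩ ∈ u := List.get_mem u _
    have hmj : u.get ⟨j, by omega⟩ ∈ u := List.get_mem u _
    exact ⟨(rk_lt_iff hmi hmj).symm, (rk_eq_iff hmi hmj).symm⟩

lemma W_get {n : ℕ} (i : Fin (W n).length) : (W n).get i = fv n i.val := by
  rw [List.get_eq_getElem]; simp [W]

lemma repeats_W {n : ℕ} (hn : 0 < n) : repeats (W n) = n^6 := by
  unfold repeats
  have hL : (W n).length = 2*n^6 := W_length n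
  set g : Fin (n^6) → Fin (W n).length :=
    fun v => ⟨pos1 n v.val, by rw [hL]; exact pos1_lt hn v.isLt⟩ with hg
  have hinj : Function.Injective g := by
    intro a b hab
    have h1 : pos1 n a.val = pos1 n b.val := congrArg Fin.val hab
    have h2 : fv n (pos1 n a.val) = fv n (pos1 n b.val) := by rw [h1]
    rw [fv_pos1 hn a.isLt, fv_pos1 hn b.isLt] at h2
    exact Fin.ext h2
  have hset : (Finset.univ.filter (fun i : Fin (W n).length =>
      ∃ j : Fin (W n).length, j < i ∧ (W n).get j = (W n).get i)) =
      Finset.image g Finset.univ := by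
    ext i
    simp only [Finset.mem_filter, Finset.mem_image, Finset.mem_univ, true_and]
    constructor
    · rintro ⟨j, hji, hw⟩
      rw [W_get, W_get] at hw
      have hib : (i : ℕ) < 2*n^6 := by rw [← hL]; exact i.isLt
      have hjb : (j : ℕ) < 2*n^6 := by rw [← hL]; exact j.isLt
      obtain ⟨-, h2⟩ := pair_occ hn hjb hib hji hw
      refine ⟨⟨fv n i.val, fv_lt hn hib⟩, ?_⟩
      apply Fin.ext
      simp only [hg]
      rw [hw] at h2
      exact h2.symm
    · rintro ⟨v, rfl⟩
      have hvb : (v : ℕ) < n^6 := v.isLt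
      refine ⟨⟨pos0 n v.val, by rw [hL]; exact pos0_lt hn hvb⟩, ?_, ?_⟩
      · exact pos0_lt_pos1 hn hvb
      · rw [W_get, W_get]
        simp only [hg]
        rw [fv_pos0 hn hvb, fv_pos1 hn hvb]
  rw [hset, Finset.card_image_of_injective _ hinj]
  simp

lemma repPat_two : ∀ n : ℕ, repPat 2 n = (List.range (2*(n+1))).map (fun j => j/2)
  | 0 => by decide
  | n+1 => by
    have ih := repPat_two n
    have hs : repPat 2 (n+1) = repPat 2 n ++ [n+1, n+1] := by
      unfold repPat
      rw [List.range_succ, List.flatMap_append]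
      simp
    rw [hs, ih, show 2*(n+1+1) = 2*(n+1)+1+1 from by ring, List.range_succ, List.range_succ,
      List.map_append, List.map_append]
    simp [show 2*(n+1)/2 = n+1 from by omega, show (2*(n+1)+1)/2 = n+1 from by omega]

lemma repPat_length (n : ℕ) : (repPat 2 n).length = 2*(n+1) := by
  rw [repPat_two]; simp

lemma repPat_getD {n i : ℕ} (hi : i < 2*(n+1)) : (repPat 2 n).getD i 0 = i/2 := by
  rw [repPat_two, List.getD_eq_getElem _ _ (by simpa using hi)]
  simp

lemma repPat_rev_length (n : ℕ) : (repPat 2 n).reverse.length = 2*(n+1) := by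
  rw [List.length_reverse, repPat_length]

lemma repPat_rev_getD {n i : ℕ} (hi : i < 2*(n+1)) :
    (repPat 2 n).reverse.getD i 0 = (2*n+1-i)/2 := by
  rw [List.getD_eq_getElem _ _ (by rw [repPat_rev_length]; exact hi)]
  rw [List.getElem_reverse]
  have hl : (repPat 2 n).length = 2*(n+1) := repPat_length n
  have : (repPat 2 n)[(repPat 2 n).length - 1 - i] =
      (repPat 2 n).getD ((repPat 2 n).length - 1 - i) 0 := by
    rw [List.getD_eq_getElem _ _ (by omega)]
  rw [this, hl, repPat_getD (by omega)]
  omega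

lemma range_getD {n i : ℕ} (hi : i < n+1) : (List.range (n+1)).getD i 0 = i := by
  rw [List.getD_eq_getElem _ _ (by simpa using hi)]
  simp

lemma range_rev_getD {n i : ℕ} (hi : i < n+1) :
    (List.range (n+1)).reverse.getD i 0 = n - i := by
  rw [List.getD_eq_getElem _ _ (by simpa using hi)]
  rw [List.getElem_reverse]
  simp only [List.getElem_range, List.length_range]
  omega

lemma core {n : ℕ} (hn : 0 < n) {p : List ℕ} (hC : Contains (W n) p)
    (hl : p.length = 2*(n+1)) (π0 π1 : ℕ → ℕ)
    (hb : ∀ k, k ≤ n → π0 k < 2*(n+1) ∧ π1 k < 2*(n+1) ∧ π0 k < π1 k)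
    (hpv : ∀ k, k ≤ n → p.getD (π0 k) 0 = k ∧ p.getD (π1 k) 0 = k) :
    ∃ v : ℕ → ℕ,
      (∀ k, k ≤ n → v k < n^6) ∧
      (∀ k l, k ≤ n → l ≤ n → k < l → v k < v l) ∧
      (∀ k l, k ≤ n → l ≤ n →
        (π0 k < π0 l → pos0 n (v k) < pos0 n (v l)) ∧
        (π0 k < π1 l → pos0 n (v k) < pos1 n (v l)) ∧
        (π1 k < π0 l → pos1 n (v k) < pos0 n (v l)) ∧
        (π1 k < π1 l → pos1 n (v k) < pos1 n (v l))) := by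
  obtain ⟨σ, hmono, hbnd, hrel⟩ := contains_spec hC
  have hLen : (W n).length = 2*n^6 := W_length n
  have hσb : ∀ i, i < 2*(n+1) → σ i < 2*n^6 := by
    intro i hi
    rw [← hLen]; exact hbnd i (by omega)
  have hWD : ∀ i, i < 2*(n+1) → (W n).getD (σ i) 0 = fv n (σ i) := by
    intro i hi; exact W_getD (hσb i hi)
  refine ⟨fun k => fv n (σ (π0 k)), ?_, ?_, ?_⟩
  · intro k hk
    exact fv_lt hn (hσb _ (hb k hk).1)
  · intro k l hk hl' hkl
    have h := (hrel (π0 k) (π0 l) (by rw [hl]; exact (hb k hk).1)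
      (by rw [hl]; exact (hb l hl').1)).1
    rw [hWD _ (hb k hk).1, hWD _ (hb l hl').1] at h
    apply h.mpr
    rw [(hpv k hk).1, (hpv l hl').1]
    exact hkl
  · have hkey : ∀ k, k ≤ n →
        σ (π0 k) = pos0 n (fv n (σ (π0 k))) ∧ σ (π1 k) = pos1 n (fv n (σ (π0 k))) := by
      intro k hk
      obtain ⟨hb0, hb1, hb01⟩ := hb k hk
      have hmo := hmono _ _ hb01 (by rw [hl]; exact hb1)
      have heqv : fv n (σ (π0 k)) = fv n (σ (π1 k)) := by
        have h := (hrel (π0 k) (π1 k) (by rw [hl]; exact hb0) (by rw [hl]; exact hb1)).2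
        rw [hWD _ hb0, hWD _ hb1] at h
        exact h.mpr (by rw [(hpv k hk).1, (hpv k hk).2])
      exact pair_occ hn (hσb _ hb0) (hσb _ hb1) hmo heqv
    intro k l hk hl'
    obtain ⟨hk0, hk1⟩ := hkey k hk
    obtain ⟨hl0, hl1⟩ := hkey l hl'
    refine ⟨fun h => ?_, fun h => ?_, fun h => ?_, fun h => ?_⟩
    · rw [← hk0, ← hl0]; exact hmono _ _ h (by rw [hl]; exact (hb l hl').1)
    · rw [← hk0, ← hl1]; exact hmono _ _ h (by rw [hl]; exact (hb l hl').2.1)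
    · rw [← hk1, ← hl0]; exact hmono _ _ h (by rw [hl]; exact (hb l hl').1)
    · rw [← hk1, ← hl1]; exact hmono _ _ h (by rw [hl]; exact (hb l hl').2.1)

lemma noRep3 {n : ℕ} (hn : 0 < n) : ¬ Contains (W n) (List.replicate 3 0) := by
  intro hC
  obtain ⟨σ, hmono, hbnd, hrel⟩ := contains_spec hC
  have hσb : ∀ i, i < 3 → σ i < 2*n^6 := by
    intro i hi
    rw [← W_length n]
    exact hbnd i (by simpa using hi)
  have hWD : ∀ i, i < 3 → (W n).getD (σ i) 0 = fv n (σ i) :=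
    fun i hi => W_getD (hσb i hi)
  have hgetD : ∀ i, i < 3 → (List.replicate 3 (0:ℕ)).getD i 0 = 0 := by
    intro i hi
    rw [List.getD_eq_getElem _ _ (by simpa using hi)]
    interval_cases i <;> rfl
  have h01 : fv n (σ 0) = fv n (σ 1) := by
    have h := (hrel 0 1 (by simp) (by simp)).2
    rw [hWD 0 (by omega), hWD 1 (by omega)] at h
    exact h.mpr (by rw [hgetD 0 (by omega), hgetD 1 (by omega)])
  have h12 : fv n (σ 1) = fv n (σ 2) := by
    have h := (hrel 1 2 (by simp) (by simp)).2
    rw [hWD 1 (by omega), hWD 2 (by omega)] at h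
    exact h.mpr (by rw [hgetD 1 (by omega), hgetD 2 (by omega)])
  obtain ⟨e1, e2⟩ := pair_occ hn (hσb 0 (by omega)) (hσb 1 (by omega))
    (hmono 0 1 (by omega) (by simp)) h01
  obtain ⟨e3, e4⟩ := pair_occ hn (hσb 1 (by omega)) (hσb 2 (by omega))
    (hmono 1 2 (by omega) (by simp)) h12
  rw [← h01] at e3
  have := pos0_lt_pos1 hn (fv_lt hn (hσb 0 (by omega)))
  omega

lemma noRepPat {n : ℕ} (hn : 0 < n) : ¬ Contains (W n) (repPat 2 n) := by
  intro hC
  have hb : ∀ k, k ≤ n → 2*k < 2*(n+1) ∧ 2*k+1 < 2*(n+1) ∧ 2*k < 2*k+1 :=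
    fun k hk => ⟨by omega, by omega, by omega⟩
  have hpv : ∀ k, k ≤ n → (repPat 2 n).getD (2*k) 0 = k ∧ (repPat 2 n).getD (2*k+1) 0 = k :=
    fun k hk => ⟨by rw [repPat_getD (by omega)]; omega, by rw [repPat_getD (by omega)]; omega⟩
  obtain ⟨v, hv, hvm, hcmp⟩ := core hn hC (repPat_length n) (fun k => 2*k) (fun k => 2*k+1) hb hpv
  apply chain_absurd (n := n) (Φ := fun k => dv2 n (v k))
  · intro k hk
    exact lemDU hn (hv k (by omega)) (hv (k+1) (by omega))
      (hvm k (k+1) (by omega) (by omega) (by omega))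
      ((hcmp k (k+1) (by omega) (by omega)).2.2.1 (show 2*k+1 < 2*(k+1) by omega))
  · exact Nat.mod_lt _ hn

lemma noRepPatRev {n : ℕ} (hn : 0 < n) : ¬ Contains (W n) (repPat 2 n).reverse := by
  intro hC
  have hb : ∀ k, k ≤ n → 2*(n-k) < 2*(n+1) ∧ 2*(n-k)+1 < 2*(n+1) ∧ 2*(n-k) < 2*(n-k)+1 :=
    fun k hk => ⟨by omega, by omega, by omega⟩
  have hpv : ∀ k, k ≤ n →
      (repPat 2 n).reverse.getD (2*(n-k)) 0 = k ∧ (repPat 2 n).reverse.getD (2*(n-k)+1) 0 = k :=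
    fun k hk => ⟨by rw [repPat_rev_getD (by omega)]; omega,
      by rw [repPat_rev_getD (by omega)]; omega⟩
  obtain ⟨v, hv, hvm, hcmp⟩ := core hn hC (repPat_rev_length n)
    (fun k => 2*(n-k)) (fun k => 2*(n-k)+1) hb hpv
  apply chain_absurd (n := n) (Φ := fun k => dv1 n (v k))
  · intro k hk
    exact lemDD hn (hv k (by omega)) (hv (k+1) (by omega))
      (hvm k (k+1) (by omega) (by omega) (by omega))
      ((hcmp (k+1) k (by omega) (by omega)).2.2.1 (show 2*(n-(k+1))+1 < 2*(n-k) by omega))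
  · exact (dv_bounds hn (hv n le_rfl)).1

lemma getD_app_left {A B : List ℕ} {k : ℕ} (hk : k < A.length) :
    (A ++ B).getD k 0 = A.getD k 0 := List.getD_append _ _ _ _ hk

lemma getD_app_right {A B : List ℕ} {k : ℕ} (hk : A.length ≤ k) :
    (A ++ B).getD k 0 = B.getD (k - A.length) 0 := List.getD_append_right _ _ _ _ hk

lemma noII {n : ℕ} (hn : 0 < n) :
    ¬ Contains (W n) (List.range (n+1) ++ List.range (n+1)) := by
  intro hC
  have hb : ∀ k, k ≤ n → k < 2*(n+1) ∧ n+1+k < 2*(n+1) ∧ k < n+1+k :=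
    fun k hk => ⟨by omega, by omega, by omega⟩
  have hpv : ∀ k, k ≤ n → (List.range (n+1) ++ List.range (n+1)).getD k 0 = k ∧
      (List.range (n+1) ++ List.range (n+1)).getD (n+1+k) 0 = k := by
    intro k hk
    constructor
    · rw [getD_app_left (by simp; omega)]; exact range_getD (by omega)
    · rw [getD_app_right (by simp)]
      simp only [List.length_range]
      rw [show n+1+k-(n+1) = k from by omega]
      exact range_getD (by omega)
  obtain ⟨v, hv, hvm, hcmp⟩ := core hn hC (by simp; ring) (fun k => k) (fun k => n+1+k) hb hpv
  apply chain_absurd (n := n) (Φ := fun k => dv6 n (v k))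
  · intro k hk
    exact lemCC hn (hv k (by omega)) (hv (k+1) (by omega))
      (hvm k (k+1) (by omega) (by omega) (by omega))
      ((hcmp k (k+1) (by omega) (by omega)).1 (show k < k+1 by omega))
      ((hcmp (k+1) k (by omega) (by omega)).2.1 (show k+1 < n+1+k by omega))
      ((hcmp k (k+1) (by omega) (by omega)).2.2.2 (show n+1+k < n+1+(k+1) by omega))
  · exact Nat.mod_lt _ hn

lemma noIR {n : ℕ} (hn : 0 < n) :
    ¬ Contains (W n) (List.range (n+1) ++ (List.range (n+1)).reverse) := by
  intro hC
  have hb : ∀ k, k ≤ n → k < 2*(n+1) ∧ n+1+(n-k) < 2*(n+1) ∧ k < n+1+(n-k) :=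
    fun k hk => ⟨by omega, by omega, by omega⟩
  have hpv : ∀ k, k ≤ n → (List.range (n+1) ++ (List.range (n+1)).reverse).getD k 0 = k ∧
      (List.range (n+1) ++ (List.range (n+1)).reverse).getD (n+1+(n-k)) 0 = k := by
    intro k hk
    constructor
    · rw [getD_app_left (by simp; omega)]; exact range_getD (by omega)
    · rw [getD_app_right (by simp)]
      simp only [List.length_range]
      rw [show n+1+(n-k)-(n+1) = n-k from by omega]
      rw [range_rev_getD (by omega)]; omega
  obtain ⟨v, hv, hvm, hcmp⟩ := core hn hC (by simp; ring) (fun k => k) (fun k => n+1+(n-k)) hb hpv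
  apply chain_absurd (n := n) (Φ := fun k => dv5 n (v k))
  · intro k hk
    exact lemNI hn (hv k (by omega)) (hv (k+1) (by omega))
      (hvm k (k+1) (by omega) (by omega) (by omega))
      ((hcmp k (k+1) (by omega) (by omega)).1 (show k < k+1 by omega))
      ((hcmp (k+1) k (by omega) (by omega)).2.2.2 (show n+1+(n-(k+1)) < n+1+(n-k) by omega))
  · exact Nat.mod_lt _ hn

lemma noRI {n : ℕ} (hn : 0 < n) :
    ¬ Contains (W n) ((List.range (n+1)).reverse ++ List.range (n+1)) := by
  intro hC
  have hb : ∀ k, k ≤ n → n-k < 2*(n+1) ∧ n+1+k < 2*(n+1) ∧ n-k < n+1+k :=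
    fun k hk => ⟨by omega, by omega, by omega⟩
  have hpv : ∀ k, k ≤ n → ((List.range (n+1)).reverse ++ List.range (n+1)).getD (n-k) 0 = k ∧
      ((List.range (n+1)).reverse ++ List.range (n+1)).getD (n+1+k) 0 = k := by
    intro k hk
    constructor
    · rw [getD_app_left (by simp only [List.length_reverse, List.length_range]; omega)]
      rw [range_rev_getD (by omega)]; omega
    · rw [getD_app_right (by simp only [List.length_reverse, List.length_range]; omega)]
      simp only [List.length_reverse, List.length_range]
      rw [show n+1+k-(n+1) = k from by omega]
      exact range_getD (by omega)
  obtain ⟨v, hv, hvm, hcmp⟩ := core hn hC (by simp; ring) (fun k => n-k) (fun k => n+1+k) hb hpv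
  apply chain_absurd (n := n) (Φ := fun k => dv3 n (v k))
  · intro k hk
    exact lemND hn (hv k (by omega)) (hv (k+1) (by omega))
      (hvm k (k+1) (by omega) (by omega) (by omega))
      ((hcmp (k+1) k (by omega) (by omega)).1 (show n-(k+1) < n-k by omega))
      ((hcmp k (k+1) (by omega) (by omega)).2.2.2 (show n+1+k < n+1+(k+1) by omega))
  · exact Nat.mod_lt _ hn

lemma noRR {n : ℕ} (hn : 0 < n) :
    ¬ Contains (W n) ((List.range (n+1)).reverse ++ (List.range (n+1)).reverse) := by
  intro hC
  have hb : ∀ k, k ≤ n → n-k < 2*(n+1) ∧ n+1+(n-k) < 2*(n+1) ∧ n-k < n+1+(n-k) :=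
    fun k hk => ⟨by omega, by omega, by omega⟩
  have hpv : ∀ k, k ≤ n →
      ((List.range (n+1)).reverse ++ (List.range (n+1)).reverse).getD (n-k) 0 = k ∧
      ((List.range (n+1)).reverse ++ (List.range (n+1)).reverse).getD (n+1+(n-k)) 0 = k := by
    intro k hk
    constructor
    · rw [getD_app_left (by simp only [List.length_reverse, List.length_range]; omega)]
      rw [range_rev_getD (by omega)]; omega
    · rw [getD_app_right (by simp only [List.length_reverse, List.length_range]; omega)]
      simp only [List.length_reverse, List.length_range]
      rw [show n+1+(n-k)-(n+1) = n-k from by omega]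
      rw [range_rev_getD (by omega)]; omega
  obtain ⟨v, hv, hvm, hcmp⟩ := core hn hC (by simp; ring) (fun k => n-k) (fun k => n+1+(n-k)) hb hpv
  apply chain_absurd (n := n) (Φ := fun k => dv4 n (v k))
  · intro k hk
    exact lemCD hn (hv k (by omega)) (hv (k+1) (by omega))
      (hvm k (k+1) (by omega) (by omega) (by omega))
      ((hcmp (k+1) k (by omega) (by omega)).1 (show n-(k+1) < n-k by omega))
      ((hcmp (k+1) k (by omega) (by omega)).2.2.2 (show n+1+(n-(k+1)) < n+1+(n-k) by omega))
      ((hcmp k (k+1) (by omega) (by omega)).2.1 (show n-k < n+1+(n-(k+1)) by omega))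
  · exact Nat.mod_lt _ hn

lemma not_contains_nil {p : List ℕ} (hp : 0 < p.length) : ¬ Contains [] p := by
  rintro ⟨u, hu, hs⟩
  rw [List.sublist_nil.mp hu] at hs
  rw [← hs] at hp
  simp [stdz] at hp

end S11

theorem stmt_11 (n : ℕ) :
    ∃ w : List ℕ, repeats w = n ^ 6 ∧
      ¬ Contains w (List.replicate 3 0) ∧
      (∀ e ∈ ({id, List.reverse} : Set (List ℕ → List ℕ)),
        ¬ Contains w (e (repPat 2 n))) ∧
      (∀ e₁ ∈ ({id, List.reverse} : Set (List ℕ → List ℕ)),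
        ∀ e₂ ∈ ({id, List.reverse} : Set (List ℕ → List ℕ)),
          ¬ Contains w (e₁ (List.range (n + 1)) ++ e₂ (List.range (n + 1)))) := by
  rcases Nat.eq_zero_or_pos n with hn | hn
  · subst hn
    refine ⟨[], ?_, ?_, ?_, ?_⟩
    · simp [repeats]
    · exact S11.not_contains_nil (by simp)
    · intro e he
      simp only [Set.mem_insert_iff, Set.mem_singleton_iff] at he
      rcases he with rfl | rfl
      · exact S11.not_contains_nil (by simp [S11.repPat_length])
      · exact S11.not_contains_nil (by simp [S11.repPat_length])
    · intro e1 he1 e2 he2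
      simp only [Set.mem_insert_iff, Set.mem_singleton_iff] at he1 he2
      rcases he1 with rfl | rfl <;> rcases he2 with rfl | rfl <;>
        exact S11.not_contains_nil (by simp)
  · refine ⟨S11.W n, S11.repeats_W hn, S11.noRep3 hn, ?_, ?_⟩
    · intro e he
      simp only [Set.mem_insert_iff, Set.mem_singleton_iff] at he
      rcases he with rfl | rfl
      · simpa using S11.noRepPat hn
      · exact S11.noRepPatRev hn
    · intro e1 he1 e2 he2
      simp only [Set.mem_insert_iff, Set.mem_singleton_iff] at he1 he2
      rcases he1 with rfl | rfl <;> rcases he2 with rfl | rfl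
      · simpa using S11.noII hn
      · simpa using S11.noIR hn
      · simpa using S11.noRI hn
      · simpa using S11.noRR hn
end
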